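/- arXiv:1707.09171 — 3 statements merged into one kernel-verified Lean document; each statement's English description precedes it below -/
import Mathlib

section
/- Let X be a two-dimensional real normed space and 0 < ρ < 1. For any u in the unit sphere S, there exists a unique u* ∈ S with u ≺ u* (u precedes u* in the counterclockwise orientation, with the chord on the positive side) such that the segment [u, u*] supports the sphere ρS, i.e., inf_{t∈[0,1]} ‖(1−t)u + t u*‖ = ρ. -/
open Real Set

/-- `N` is a norm on the two-dimensional real vector space `ℝ × ℝ`. -/
def IsNorm (N : ℝ × ℝ → ℝ) : Prop :=
  (∀ x, N x = 0 ↔ x = 0) ∧ (∀ (a : ℝ) (x : ℝ × ℝ), N (a • x) = |a| * N x) ∧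
    ∀ x y, N (x + y) ≤ N x + N y

/-- The 2D cross product `u ∧ v`; `u ≺ v` means `0 < wedge u v`. -/
def wedge (u v : ℝ × ℝ) : ℝ := u.1 * v.2 - u.2 * v.1

/-- `inf_{t ∈ [0,1]} N ((1−t)u + tv)`, the minimal `N`-norm on the segment `[u,v]`. -/
noncomputable def segInf (N : ℝ × ℝ → ℝ) (u v : ℝ × ℝ) : ℝ :=
  sInf ((fun t : ℝ => N ((1 - t) • u + t • v)) '' Icc (0:ℝ) 1)

/-- Property (P-ρS): every chord of the unit sphere of `N` that supports `ρS`
touches `ρS` at its midpoint. -/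
def PropP (N : ℝ × ℝ → ℝ) (ρ : ℝ) : Prop :=
  ∀ u v : ℝ × ℝ, N u = 1 → N v = 1 → segInf N u v = ρ →
    N ((1/2 : ℝ) • u + (1/2 : ℝ) • v) = ρ

lemma isnorm_zero {N} (hN : IsNorm N) : N 0 = 0 := (hN.1 0).2 rfl

lemma isnorm_nonneg {N} (hN : IsNorm N) (x : ℝ × ℝ) : 0 ≤ N x := by
  have h := hN.2.2 x (-x)
  have h2 : N (-x) = N x := by
    have := hN.2.1 (-1) x
    simpa using this
  have h3 : N (x + -x) = 0 := by simpa using isnorm_zero hN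
  nlinarith [h, h2, h3]

lemma isnorm_lip {N} (hN : IsNorm N) : ∃ K : ℝ, 0 < K ∧ ∀ x : ℝ × ℝ, N x ≤ K * ‖x‖ := by
  refine ⟨N (1,0) + N (0,1) + 1, by nlinarith [isnorm_nonneg hN (1,0), isnorm_nonneg hN (0,1)], fun x => ?_⟩
  have hx : x = x.1 • ((1:ℝ),(0:ℝ)) + x.2 • ((0:ℝ),(1:ℝ)) := by
    simp [Prod.ext_iff]
  have h1 : N (x.1 • ((1:ℝ),(0:ℝ))) = |x.1| * N (1,0) := hN.2.1 _ _
  have h2 : N (x.2 • ((0:ℝ),(1:ℝ))) = |x.2| * N (0,1) := hN.2.1 _ _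
  have htri := hN.2.2 (x.1 • ((1:ℝ),(0:ℝ))) (x.2 • ((0:ℝ),(1:ℝ)))
  rw [← hx] at htri
  have hb1 : |x.1| ≤ ‖x‖ := by simpa using norm_fst_le x
  have hb2 : |x.2| ≤ ‖x‖ := by simpa using norm_snd_le x
  have hn0 : (0:ℝ) ≤ ‖x‖ := norm_nonneg x
  nlinarith [isnorm_nonneg hN (1,0), isnorm_nonneg hN (0,1)]

lemma isnorm_cont {N} (hN : IsNorm N) : Continuous N := by
  obtain ⟨K, hK0, hK⟩ := isnorm_lip hN
  have : LipschitzWith (Real.toNNReal K) N := by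
    apply LipschitzWith.of_dist_le_mul
    intro x y
    have h1 : N x ≤ N (x - y) + N y := by
      have := hN.2.2 (x - y) y; simpa using this
    have h2 : N y ≤ N (y - x) + N x := by
      have := hN.2.2 (y - x) x; simpa using this
    have h3 : N (y - x) = N (x - y) := by
      have := hN.2.1 (-1) (x - y); simpa using this
    have h4 : N (x - y) ≤ K * ‖x - y‖ := hK _
    have h5 : dist x y = ‖x - y‖ := dist_eq_norm x y
    rw [Real.dist_eq, Real.coe_toNNReal K hK0.le, h5]
    rw [abs_le]
    constructor <;> nlinarith
  exact this.continuous

lemma seg_convex {N} (hN : IsNorm N) (u v : ℝ × ℝ) (a b μ : ℝ) (hμ0 : 0 ≤ μ) (hμ1 : μ ≤ 1) :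
    N ((1 - ((1-μ)*a + μ*b)) • u + ((1-μ)*a + μ*b) • v) ≤
      (1-μ) * N ((1-a) • u + a • v) + μ * N ((1-b) • u + b • v) := by
  have key : (1 - ((1-μ)*a + μ*b)) • u + ((1-μ)*a + μ*b) • v =
      (1-μ) • ((1-a) • u + a • v) + μ • ((1-b) • u + b • v) := by
    simp [Prod.ext_iff, Prod.smul_def, smul_eq_mul]
    constructor <;> ring
  rw [key]
  calc N ((1-μ) • ((1-a) • u + a • v) + μ • ((1-b) • u + b • v))
      ≤ N ((1-μ) • ((1-a) • u + a • v)) + N (μ • ((1-b) • u + b • v)) := hN.2.2 _ _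
    _ = (1-μ) * N ((1-a) • u + a • v) + μ * N ((1-b) • u + b • v) := by
        rw [hN.2.1, hN.2.1, abs_of_nonneg (by linarith), abs_of_nonneg hμ0]

lemma seg_cont {N} (hN : IsNorm N) (u v : ℝ × ℝ) :
    Continuous (fun t : ℝ => N ((1 - t) • u + t • v)) := by
  exact (isnorm_cont hN).comp (by continuity)

lemma segInf_attained {N} (hN : IsNorm N) {u v : ℝ × ℝ} {ρ : ℝ} (hu : N u = 1) (hv : N v = 1)
    (hseg : segInf N u v = ρ) (hρ1 : ρ < 1) :
    ∃ t : ℝ, 0 < t ∧ t < 1 ∧ N ((1-t) • u + t • v) = ρ ∧ ∀ s : ℝ, ρ ≤ N ((1-s) • u + s • v) := by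
  set f := fun t : ℝ => N ((1 - t) • u + t • v) with hf
  have hc : Continuous f := seg_cont hN u v
  have hcomp : IsCompact (f '' Icc (0:ℝ) 1) := (isCompact_Icc).image hc
  have hne : (f '' Icc (0:ℝ) 1).Nonempty := ⟨f 0, ⟨(0:ℝ), by simp, rfl⟩⟩
  have hmem : sInf (f '' Icc (0:ℝ) 1) ∈ f '' Icc (0:ℝ) 1 := hcomp.sInf_mem hne
  rw [show sInf (f '' Icc (0:ℝ) 1) = ρ from hseg] at hmem
  obtain ⟨t, ht, hft⟩ := hmem
  have hf0 : f 0 = 1 := by simp [hf, hu]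
  have hf1 : f 1 = 1 := by simp [hf, hv]
  have hlow : ∀ s ∈ Icc (0:ℝ) 1, ρ ≤ f s := by
    intro s hs
    rw [← hseg]
    refine csInf_le ⟨0, ?_⟩ ⟨s, hs, rfl⟩
    rintro y ⟨z, -, rfl⟩
    exact isnorm_nonneg hN _
  have ht0 : 0 < t := by
    rcases lt_or_eq_of_le ht.1 with h | h
    · exact h
    · exfalso; rw [← h] at hft; rw [hf0] at hft; linarith
  have ht1 : t < 1 := by
    rcases lt_or_eq_of_le ht.2 with h | h
    · exact h
    · exfalso; rw [h] at hft; rw [hf1] at hft; linarith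
  refine ⟨t, ht0, ht1, hft, fun s => ?_⟩
  rcases le_or_gt 0 s with hs0 | hs0
  · rcases le_or_gt s 1 with hs1 | hs1
    · exact hlow s ⟨hs0, hs1⟩
    · -- s > 1
      by_contra hcon
      push_neg at hcon
      set μ := (1 - t) / (s - t) with hμ
      have hst : t < s := by linarith
      have hμ0 : 0 < μ := div_pos (by linarith) (by linarith)
      have hμ1 : μ < 1 := by rw [div_lt_one (by linarith)]; linarith
      have hmul : μ * (s - t) = 1 - t := div_mul_cancel₀ _ (by linarith)
      have hcomb : (1-μ)*t + μ*s = 1 := by linear_combination hmul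
      have := seg_convex hN u v t s μ hμ0.le hμ1.le
      rw [hcomb] at this
      have : f 1 ≤ (1-μ) * f t + μ * f s := this
      rw [hf1, hft] at this
      nlinarith
  · -- s < 0
    by_contra hcon
    push_neg at hcon
    set μ := t / (t - s) with hμ
    have hμ0 : 0 < μ := div_pos ht0 (by linarith)
    have hμ1 : μ < 1 := by rw [div_lt_one (by linarith)]; linarith
    have hmul : μ * (t - s) = t := div_mul_cancel₀ _ (by linarith)
    have hcomb : (1-μ)*t + μ*s = 0 := by linear_combination -hmul
    have := seg_convex hN u v t s μ hμ0.le hμ1.le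
    rw [hcomb] at this
    have : f 0 ≤ (1-μ) * f t + μ * f s := this
    rw [hf0, hft] at this
    nlinarith

lemma wedge_zero_collinear {a b : ℝ × ℝ} (ha : a ≠ 0) (h : wedge a b = 0) :
    ∃ c : ℝ, b = c • a := by
  simp only [wedge] at h
  rcases eq_or_ne a.1 0 with h1 | h1
  · have h2 : a.2 ≠ 0 := by
      intro h2; exact ha (Prod.ext h1 h2)
    refine ⟨b.2 / a.2, ?_⟩
    have hb1 : b.1 = b.2 / a.2 * a.1 := by
      field_simp
      nlinarith [h]
    exact Prod.ext (by simpa using hb1) (by simp [Prod.smul_def, smul_eq_mul]; field_simp)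
  · refine ⟨b.1 / a.1, ?_⟩
    have hb2 : b.2 = b.1 / a.1 * a.2 := by
      field_simp
      nlinarith [h]
    exact Prod.ext (by simp [Prod.smul_def, smul_eq_mul]; field_simp) (by simpa using hb2)

lemma ball_side {N} (hN : IsNorm N) {u w' : ℝ × ℝ} {ρ : ℝ} (hρ0 : 0 < ρ)
    (hA : 0 < wedge u w')
    (hline : ∀ s : ℝ, ρ ≤ N ((1-s) • u + s • w')) :
    ∀ q : ℝ × ℝ, N q ≤ ρ → 0 ≤ wedge (w' - u) (q - u) := by
  intro q hq
  by_contra hB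
  push_neg at hB
  set A := wedge u w' with hAdef
  set B := wedge (w' - u) (q - u) with hBdef
  have hA0 : wedge (w' - u) ((0:ℝ × ℝ) - u) = A := by
    simp only [wedge, hAdef, Prod.fst_sub, Prod.snd_sub, Prod.fst_zero, Prod.snd_zero]
    ring
  set s := A / (A - B) with hs
  have hAB : 0 < A - B := by linarith
  have hs0 : 0 < s := div_pos hA hAB
  have hs1 : s < 1 := by rw [div_lt_one hAB]; linarith
  have hmul : s * (A - B) = A := div_mul_cancel₀ _ (ne_of_gt hAB)
  -- the point r = s • q lies on the line through u and w'
  have hr : wedge (w' - u) (s • q - u) = 0 := by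
    have expand : wedge (w' - u) (s • q - u) = s * B + (1 - s) * A := by
      simp only [wedge, hBdef, hAdef, Prod.fst_sub, Prod.snd_sub, Prod.smul_fst,
        Prod.smul_snd, smul_eq_mul]
      ring
    rw [expand]; linear_combination -hmul
  have hd : w' - u ≠ 0 := by
    intro h0
    rw [h0] at hA0
    simp only [wedge, Prod.fst_zero, Prod.snd_zero] at hA0
    rw [← hA0] at hA; simp at hA
  obtain ⟨c, hc⟩ := wedge_zero_collinear hd hr
  have hline_r : ρ ≤ N (s • q) := by
    have : s • q = (1 - c) • u + c • w' := by
      have : s • q - u = c • (w' - u) := hc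
      apply Prod.ext <;>
        · have h1 := congrArg Prod.fst this
          have h2 := congrArg Prod.snd this
          simp only [Prod.fst_sub, Prod.snd_sub, Prod.smul_fst, Prod.smul_snd, smul_eq_mul,
            Prod.fst_add, Prod.snd_add] at *
          linarith
    rw [this]; exact hline c
  have : N (s • q) = s * N q := by rw [hN.2.1, abs_of_pos hs0]
  nlinarith [isnorm_nonneg hN q]

lemma unique_side {N} (hN : IsNorm N) {ρ : ℝ} (hρ0 : 0 < ρ) (hρ1 : ρ < 1) {u w w' : ℝ × ℝ}
    (hu : N u = 1) (hw : N w = 1) (hw' : N w' = 1)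
    (hwedge : 0 < wedge u w) (hwedge' : 0 < wedge u w')
    (hs : segInf N u w = ρ) (hs' : segInf N u w' = ρ)
    (hside : wedge (w' - u) (w - u) ≤ 0) : w = w' := by
  obtain ⟨t, ht0, ht1, hpt, hlinew⟩ := segInf_attained hN hu hw hs hρ1
  obtain ⟨t', ht'0, ht'1, hpt', hline'⟩ := segInf_attained hN hu hw' hs' hρ1
  -- the minimizing point p on [u,w] satisfies 0 ≤ wedge (w'-u) (p-u)
  have hp_side : 0 ≤ wedge (w' - u) (((1-t) • u + t • w) - u) :=
    ball_side hN hρ0 hwedge' hline' _ (le_of_eq hpt)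
  have hfactor : wedge (w' - u) (((1-t) • u + t • w) - u) = t * wedge (w' - u) (w - u) := by
    simp only [wedge, Prod.fst_sub, Prod.snd_sub, Prod.fst_add, Prod.snd_add,
      Prod.smul_fst, Prod.smul_snd, smul_eq_mul]
    ring
  have hw_on_line : wedge (w' - u) (w - u) = 0 := by
    nlinarith [hp_side, hfactor]
  have hd : w' - u ≠ 0 := by
    intro h0
    have : wedge u w' = 0 := by
      have hq : w' = u := by
        have := sub_eq_zero.mp h0; exact this
      rw [hq]; simp [wedge]; ring
    linarith
  obtain ⟨c, hc⟩ := wedge_zero_collinear hd hw_on_line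
  have hwc : w = (1 - c) • u + c • w' := by
    apply Prod.ext <;>
      · have h1 := congrArg Prod.fst hc
        have h2 := congrArg Prod.snd hc
        simp only [Prod.fst_sub, Prod.snd_sub, Prod.smul_fst, Prod.smul_snd, smul_eq_mul,
          Prod.fst_add, Prod.snd_add] at *
        linarith
  have hfc : N ((1 - c) • u + c • w') = 1 := by rw [← hwc]; exact hw
  have hc0 : c ≠ 0 := by
    intro h0
    rw [h0] at hwc
    simp at hwc
    rw [hwc] at hwedge
    simp [wedge] at hwedge
    linarith
  have hcne : c = 1 := by
    rcases lt_trichotomy c t' with hlt | heq | hgt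
    · rcases lt_or_ge c 0 with hneg | hpos
      · exfalso
        set μ := c / (c - t') with hμ
        have hden : c - t' < 0 := by linarith
        have hμ0 : 0 < μ := div_pos_of_neg_of_neg (by linarith) hden
        have hmul : μ * (c - t') = c := div_mul_cancel₀ _ (ne_of_lt hden)
        have hμ1 : μ < 1 := by nlinarith
        have hcomb : (1-μ)*c + μ*t' = 0 := by linear_combination -hmul
        have hconv := seg_convex hN u w' c t' μ hμ0.le hμ1.le
        rw [hcomb, hfc, hpt'] at hconv
        simp only [sub_zero, zero_smul, one_smul, add_zero] at hconv
        rw [hu] at hconv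
        nlinarith
      · exfalso
        have hcpos : 0 < c := lt_of_le_of_ne hpos (Ne.symm hc0)
        set μ := c / t' with hμ
        have hμ0 : 0 < μ := div_pos hcpos ht'0
        have hμ1 : μ < 1 := by rw [div_lt_one ht'0]; exact hlt
        have hmul : μ * t' = c := div_mul_cancel₀ _ (ne_of_gt ht'0)
        have hcomb : (1-μ)*0 + μ*t' = c := by linear_combination hmul
        have hconv := seg_convex hN u w' 0 t' μ hμ0.le hμ1.le
        rw [hcomb, hfc, hpt'] at hconv
        simp only [sub_zero, zero_smul, one_smul, add_zero] at hconv
        rw [hu] at hconv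
        nlinarith
    · exfalso; rw [heq] at hfc; rw [hpt'] at hfc; linarith
    · rcases lt_trichotomy c 1 with hlt1 | heq1 | hgt1
      · exfalso
        set μ := (c - t') / (1 - t') with hμ
        have hμ0 : 0 < μ := div_pos (by linarith) (by linarith)
        have hμ1 : μ < 1 := by rw [div_lt_one (by linarith)]; linarith
        have hmul : μ * (1 - t') = c - t' := div_mul_cancel₀ _ (by linarith)
        have hcomb : (1-μ)*t' + μ*1 = c := by linear_combination hmul
        have hconv := seg_convex hN u w' t' 1 μ hμ0.le hμ1.le
        rw [hcomb, hfc, hpt'] at hconv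
        simp only [sub_self, zero_smul, one_smul, zero_add] at hconv
        rw [hw'] at hconv
        nlinarith
      · exact heq1
      · exfalso
        set μ := (1 - t') / (c - t') with hμ
        have hμ0 : 0 < μ := div_pos (by linarith) (by linarith)
        have hμ1 : μ < 1 := by rw [div_lt_one (by linarith)]; linarith
        have hmul : μ * (c - t') = 1 - t' := div_mul_cancel₀ _ (by linarith)
        have hcomb : (1-μ)*t' + μ*c = 1 := by linear_combination hmul
        have hconv := seg_convex hN u w' t' c μ hμ0.le hμ1.le
        rw [hcomb, hfc, hpt'] at hconv
        simp only [sub_self, zero_smul, one_smul, zero_add] at hconv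
        rw [hw'] at hconv
        nlinarith
  rw [hcne] at hwc
  rw [hwc]
  norm_num

lemma segInf_le_add {N} (hN : IsNorm N) (u v v' : ℝ × ℝ) :
    segInf N u v ≤ segInf N u v' + N (v - v') := by
  have key : ∀ t ∈ Icc (0:ℝ) 1,
      segInf N u v - N (v - v') ≤ N ((1 - t) • u + t • v') := by
    intro t ht
    have h1 : segInf N u v ≤ N ((1 - t) • u + t • v) := by
      refine csInf_le ⟨0, ?_⟩ ⟨t, ht, rfl⟩
      rintro y ⟨z, -, rfl⟩
      exact isnorm_nonneg hN _
    have h2 : N ((1 - t) • u + t • v) ≤ N ((1 - t) • u + t • v') + N (t • (v - v')) := by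
      have := hN.2.2 ((1 - t) • u + t • v') (t • (v - v'))
      have he : (1 - t) • u + t • v' + t • (v - v') = (1 - t) • u + t • v := by
        apply Prod.ext <;> simp [Prod.smul_def, smul_eq_mul] <;> ring
      rw [he] at this
      exact this
    have h3 : N (t • (v - v')) ≤ N (v - v') := by
      rw [hN.2.1, abs_of_nonneg ht.1]
      nlinarith [isnorm_nonneg hN (v - v'), ht.2]
    linarith
  have hne : ((fun t : ℝ => N ((1 - t) • u + t • v')) '' Icc (0:ℝ) 1).Nonempty :=
    ⟨_, ⟨(0:ℝ), by simp, rfl⟩⟩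
  have := le_csInf hne (by rintro y ⟨t, ht, rfl⟩; exact key t ht)
  have : segInf N u v - N (v - v') ≤ segInf N u v' := this
  linarith

lemma segInf_cont {N} (hN : IsNorm N) (u : ℝ × ℝ) : Continuous (segInf N u) := by
  obtain ⟨K, hK0, hK⟩ := isnorm_lip hN
  have hlip : LipschitzWith (Real.toNNReal K) (segInf N u) := by
    apply LipschitzWith.of_dist_le_mul
    intro v v'
    have h1 := segInf_le_add hN u v v'
    have h2 := segInf_le_add hN u v' v
    have h3 : N (v' - v) = N (v - v') := by
      have := hN.2.1 (-1) (v - v')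
      simpa using this
    have h4 : N (v - v') ≤ K * ‖v - v'‖ := hK _
    rw [Real.dist_eq, Real.coe_toNNReal K hK0.le, dist_eq_norm, abs_le]
    constructor <;> nlinarith
  exact hlip.continuous

lemma segInf_self {N} (hN : IsNorm N) (u : ℝ × ℝ) (hu : N u = 1) : segInf N u u = 1 := by
  have : ∀ t : ℝ, (1 - t) • u + t • u = u := by
    intro t
    rw [← add_smul]
    norm_num
  unfold segInf
  simp only [this]
  rw [Set.Nonempty.image_const ⟨0, by simp⟩]
  simp [hu]

lemma segInf_neg {N} (hN : IsNorm N) (u : ℝ × ℝ) (hu : N u = 1) : segInf N u (-u) = 0 := by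
  apply le_antisymm
  · have hmem : (0:ℝ) ∈ (fun t : ℝ => N ((1 - t) • u + t • (-u))) '' Icc (0:ℝ) 1 := by
      refine ⟨1/2, by norm_num, ?_⟩
      have : (1 - (1/2:ℝ)) • u + (1/2:ℝ) • (-u) = 0 := by
        apply Prod.ext <;> simp [Prod.smul_def, smul_eq_mul] <;> ring
      show N ((1 - (1/2:ℝ)) • u + (1/2:ℝ) • (-u)) = 0
      rw [this, isnorm_zero hN]
    exact csInf_le ⟨0, by rintro y ⟨z, -, rfl⟩; exact isnorm_nonneg hN _⟩ hmem
  · refine le_csInf ⟨_, ⟨(0:ℝ), by simp, rfl⟩⟩ ?_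
    rintro y ⟨z, -, rfl⟩
    exact isnorm_nonneg hN _

/-- For any `u` on the unit sphere of a 2-dimensional normed space and
`0 < ρ < 1`, there is a unique `u* ∈ S` with `u ≺ u*` such that the chord `[u,u*]`
supports `ρS`. -/
theorem stmt_2 (N : ℝ × ℝ → ℝ) (hN : IsNorm N) (ρ : ℝ) (hρ0 : 0 < ρ) (hρ1 : ρ < 1)
    (u : ℝ × ℝ) (hu : N u = 1) :
    ∃! w : ℝ × ℝ, N w = 1 ∧ 0 < wedge u w ∧ segInf N u w = ρ := by
  have hu0 : u ≠ 0 := by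
    intro h
    rw [h, isnorm_zero hN] at hu
    norm_num at hu
  have hsq : 0 < u.1^2 + u.2^2 := by
    by_contra h
    push_neg at h
    have h1 : u.1 = 0 := by nlinarith
    have h2 : u.2 = 0 := by nlinarith
    exact hu0 (Prod.ext h1 h2)
  set R : ℝ → ℝ × ℝ := fun θ => (cos θ * u.1 - sin θ * u.2, sin θ * u.1 + cos θ * u.2)
    with hR
  have hRsq : ∀ θ, (R θ).1^2 + (R θ).2^2 = u.1^2 + u.2^2 := by
    intro θ
    simp only [hR]
    linear_combination (u.1^2 + u.2^2) * (sin_sq_add_cos_sq θ)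
  have hNR : ∀ θ, 0 < N (R θ) := by
    intro θ
    rcases lt_or_eq_of_le (isnorm_nonneg hN (R θ)) with h | h
    · exact h
    · exfalso
      have : R θ = 0 := (hN.1 _).1 h.symm
      have h2 := hRsq θ
      rw [this] at h2
      simp at h2
      nlinarith
  set W : ℝ → ℝ × ℝ := fun θ => (N (R θ))⁻¹ • R θ with hW
  have hNW : ∀ θ, N (W θ) = 1 := by
    intro θ
    simp only [hW]
    rw [hN.2.1, abs_of_pos (inv_pos.mpr (hNR θ))]
    field_simp
    exact div_self (ne_of_gt (hNR θ))
  have hwedgeW : ∀ θ, wedge u (W θ) = (N (R θ))⁻¹ * (sin θ * (u.1^2 + u.2^2)) := by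
    intro θ
    simp only [hW, hR, wedge, Prod.smul_fst, Prod.smul_snd, smul_eq_mul]
    ring
  have hW0 : W 0 = u := by
    have hR0 : R 0 = u := by
      simp only [hR]
      apply Prod.ext <;> simp
    simp only [hW, hR0, hu]
    norm_num
  have hWpi : W π = -u := by
    have hRpi : R π = -u := by
      simp only [hR]
      apply Prod.ext <;> simp
    have hNnu : N (-u) = 1 := by
      have := hN.2.1 (-1) u
      simp [hu] at this
      simpa using this
    simp only [hW, hRpi, hNnu]
    norm_num
  set F : ℝ → ℝ := fun θ => segInf N u (W θ) with hF
  have hFc : Continuous F := by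
    apply (segInf_cont hN u).comp
    show Continuous (fun θ => (N (R θ))⁻¹ • R θ)
    apply Continuous.fun_smul
    · apply Continuous.inv₀
      · exact (isnorm_cont hN).comp (by fun_prop)
      · exact fun θ => ne_of_gt (hNR θ)
    · fun_prop
  have hF0 : F 0 = 1 := by
    simp only [hF, hW0]
    exact segInf_self hN u hu
  have hFpi : F π = 0 := by
    simp only [hF, hWpi]
    exact segInf_neg hN u hu
  have hρmem : ρ ∈ Icc (F π) (F 0) := by
    rw [hF0, hFpi]
    exact ⟨hρ0.le, hρ1.le⟩
  obtain ⟨θ, hθmem, hFθ⟩ := intermediate_value_Icc' (le_of_lt pi_pos) hFc.continuousOn hρmem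
  have hθ0 : 0 < θ := by
    rcases lt_or_eq_of_le hθmem.1 with h | h
    · exact h
    · exfalso; rw [← h] at hFθ; rw [hF0] at hFθ; linarith
  have hθπ : θ < π := by
    rcases lt_or_eq_of_le hθmem.2 with h | h
    · exact h
    · exfalso; rw [h] at hFθ; rw [hFpi] at hFθ; linarith
  have hsin : 0 < sin θ := sin_pos_of_pos_of_lt_pi hθ0 hθπ
  have hwpos : 0 < wedge u (W θ) := by
    rw [hwedgeW θ]
    have := hNR θ
    positivity
  refine ⟨W θ, ⟨hNW θ, hwpos, hFθ⟩, ?_⟩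
  rintro y ⟨hy1, hy2, hy3⟩
  rcases le_or_gt (wedge (W θ - u) (y - u)) 0 with h | h
  · exact unique_side hN hρ0 hρ1 hu hy1 (hNW θ) hy2 hwpos hy3 hFθ h
  · have h' : wedge (y - u) (W θ - u) ≤ 0 := by
      have hanti : wedge (y - u) (W θ - u) = -wedge (W θ - u) (y - u) := by
        simp only [wedge]; ring
      rw [hanti]; linarith
    exact (unique_side hN hρ0 hρ1 hu (hNW θ) hy1 hwpos hy2 hFθ hy3 h').symm
end

section
/- Let X be a two-dimensional real normed space with unit sphere S and 0 < ρ < 1. Suppose X satisfies property (P-ρS): whenever u, v ∈ S and inf_{t∈[0,1]} ‖(1−t)u + tv‖ = ρ, then ‖(1/2)u + (1/2)v‖ = ρ. Then X is strictly convex, i.e., for all distinct x, y ∈ S, ‖(x+y)/2‖ < 1. -/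
open Real Set

open Filter

section Aux

variable {N : ℝ × ℝ → ℝ}

lemma nm_zero (hN : IsNorm N) : N 0 = 0 := (hN.1 0).2 rfl

lemma nm_neg (hN : IsNorm N) (z : ℝ × ℝ) : N (-z) = N z := by
  have := hN.2.1 (-1) z
  simpa using this

lemma nm_nonneg (hN : IsNorm N) (z : ℝ × ℝ) : 0 ≤ N z := by
  have h := hN.2.2 z (-z)
  rw [add_neg_cancel, nm_zero hN, nm_neg hN] at h
  linarith

lemma nm_sub (hN : IsNorm N) (z w : ℝ × ℝ) : N z ≤ N w + N (z - w) := by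
  have h := hN.2.2 w (z - w)
  simpa using h

lemma nm_smul_nonneg (hN : IsNorm N) {a : ℝ} (ha : 0 ≤ a) (z : ℝ × ℝ) :
    N (a • z) = a * N z := by
  rw [hN.2.1, abs_of_nonneg ha]

lemma nm_conv (hN : IsNorm N) (z w : ℝ × ℝ) {t : ℝ} (h0 : 0 ≤ t) (h1 : t ≤ 1) :
    N ((1 - t) • z + t • w) ≤ (1 - t) * N z + t * N w := by
  calc N ((1 - t) • z + t • w) ≤ N ((1 - t) • z) + N (t • w) := hN.2.2 _ _
    _ = (1 - t) * N z + t * N w := by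
        rw [nm_smul_nonneg hN (by linarith), nm_smul_nonneg hN h0]

lemma nm_le (hN : IsNorm N) (z : ℝ × ℝ) : N z ≤ (N (1,0) + N (0,1)) * ‖z‖ := by
  have hz : z = z.1 • ((1:ℝ),(0:ℝ)) + z.2 • ((0:ℝ),(1:ℝ)) := by
    ext <;> simp
  calc N z ≤ N (z.1 • ((1:ℝ),(0:ℝ))) + N (z.2 • ((0:ℝ),(1:ℝ))) := by
        conv_lhs => rw [hz]
        exact hN.2.2 _ _
    _ = |z.1| * N (1,0) + |z.2| * N (0,1) := by rw [hN.2.1, hN.2.1]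
    _ ≤ ‖z‖ * N (1,0) + ‖z‖ * N (0,1) := by
        have h1 : |z.1| ≤ ‖z‖ := by simpa [Real.norm_eq_abs] using norm_fst_le z
        have h2 : |z.2| ≤ ‖z‖ := by simpa [Real.norm_eq_abs] using norm_snd_le z
        have := nm_nonneg hN ((1:ℝ),(0:ℝ))
        have := nm_nonneg hN ((0:ℝ),(1:ℝ))
        nlinarith
    _ = (N (1,0) + N (0,1)) * ‖z‖ := by ring

lemma nm_cont (hN : IsNorm N) : Continuous N := by
  have key : ∀ z w : ℝ × ℝ, |N z - N w| ≤ (N (1,0) + N (0,1)) * ‖z - w‖ := by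
    intro z w
    rw [abs_sub_le_iff]
    constructor
    · have := nm_sub hN z w
      have := nm_le hN (z - w)
      linarith
    · have h3 := nm_sub hN w z
      have h4 : N (w - z) = N (z - w) := by rw [show w - z = -(z-w) by abel, nm_neg hN]
      have h5 := nm_le hN (z - w)
      linarith
  rw [Metric.continuous_iff]
  intro z ε hε
  rcases le_or_gt (N (1,0) + N (0,1)) 0 with hC | hC
  · exact ⟨1, one_pos, fun w _ => by
      have := key w z
      have hn : (0:ℝ) ≤ ‖w - z‖ := norm_nonneg _
      have : |N w - N z| ≤ 0 := le_trans (key w z) (by nlinarith)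
      simp only [Real.dist_eq]
      linarith [abs_nonneg (N w - N z)]⟩
  · refine ⟨ε / (N (1,0) + N (0,1)), by positivity, fun w hw => ?_⟩
    have := key w z
    simp only [Real.dist_eq]
    rw [dist_eq_norm] at hw
    calc |N w - N z| ≤ (N (1,0) + N (0,1)) * ‖w - z‖ := key w z
      _ < (N (1,0) + N (0,1)) * (ε / (N (1,0) + N (0,1))) := by
          exact mul_lt_mul_of_pos_left hw hC
      _ = ε := by field_simp

lemma nm_lower (hN : IsNorm N) : ∃ c : ℝ, 0 < c ∧ ∀ z, c * ‖z‖ ≤ N z := by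
  have hsph : IsCompact (Metric.sphere (0:ℝ×ℝ) 1) := isCompact_sphere _ _
  have hne : (Metric.sphere (0:ℝ×ℝ) 1).Nonempty := by
    refine ⟨((1:ℝ),(0:ℝ)), ?_⟩
    simp [Prod.norm_def]
  obtain ⟨z0, hz0, hmin⟩ := hsph.exists_isMinOn hne ((nm_cont hN).continuousOn)
  have hz0n : ‖z0‖ = 1 := by simpa using hz0
  have hz0ne : z0 ≠ 0 := by
    intro h; rw [h] at hz0n; simp at hz0n
  have hc : 0 < N z0 := by
    rcases (nm_nonneg hN z0).lt_or_eq with h | h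
    · exact h
    · exact absurd ((hN.1 z0).1 h.symm) hz0ne
  refine ⟨N z0, hc, fun z => ?_⟩
  rcases eq_or_ne z 0 with rfl | hz
  · simp [nm_zero hN]
  · have hnz : (0:ℝ) < ‖z‖ := norm_pos_iff.2 hz
    have hmem : ‖z‖⁻¹ • z ∈ Metric.sphere (0:ℝ×ℝ) 1 := by
      simp [norm_smul, abs_of_pos (inv_pos.2 hnz), inv_mul_cancel₀ hnz.ne']
    have h1 : N z0 ≤ N (‖z‖⁻¹ • z) := hmin hmem
    have h2 : N (‖z‖⁻¹ • z) = ‖z‖⁻¹ * N z := nm_smul_nonneg hN (by positivity) z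
    have : N z0 ≤ ‖z‖⁻¹ * N z := h2 ▸ h1
    calc N z0 * ‖z‖ ≤ (‖z‖⁻¹ * N z) * ‖z‖ := by nlinarith
      _ = N z := by field_simp

-- kernel lemma
lemma klem {d w : ℝ × ℝ} (hd : d ≠ 0) (h : d.1 * w.2 - d.2 * w.1 = 0) :
    ∃ t : ℝ, w = t • d := by
  have hd' : d.1 ≠ 0 ∨ d.2 ≠ 0 := by
    by_contra hc
    push_neg at hc
    exact hd (Prod.ext hc.1 hc.2)
  rcases hd' with h1 | h2
  · refine ⟨w.1 / d.1, ?_⟩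
    ext
    · simp [div_mul_cancel₀, h1]
    · show w.2 = w.1 / d.1 * d.2
      field_simp
      nlinarith [h]
  · refine ⟨w.2 / d.2, ?_⟩
    ext
    · show w.1 = w.2 / d.2 * d.1
      field_simp
      nlinarith [h]
    · simp [div_mul_cancel₀, h2]

-- from two linear relations to wedge
lemma wlem {A B : ℝ} {d w : ℝ × ℝ} (hAB : ¬(A = 0 ∧ B = 0))
    (h1 : A * d.1 + B * d.2 = 0) (h2 : A * w.1 + B * w.2 = 0) :
    d.1 * w.2 - d.2 * w.1 = 0 := by
  rcases not_and_or.mp hAB with hA | hB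
  · have : A * (d.1 * w.2 - d.2 * w.1) = 0 := by linear_combination w.2 * h1 - d.2 * h2
    rcases mul_eq_zero.mp this with h | h
    · exact absurd h hA
    · exact h
  · have : B * (d.1 * w.2 - d.2 * w.1) = 0 := by linear_combination d.1 * h2 - w.1 * h1
    rcases mul_eq_zero.mp this with h | h
    · exact absurd h hB
    · exact h

lemma chord (hN : IsNorm N) {ρ : ℝ} (hρ0 : 0 < ρ) (hρ1 : ρ < 1) (hP : PropP N ρ)
    {A B : ℝ} (hAB : ¬(A = 0 ∧ B = 0)) :
    ∃ u v : ℝ × ℝ, N u = 1 ∧ N v = 1 ∧ N ((1/2:ℝ) • u + (1/2:ℝ) • v) = ρ ∧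
      (∀ w, N w ≤ ρ → A * w.1 + B * w.2 ≤ A * u.1 + B * u.2) ∧
      A * u.1 + B * u.2 = A * v.1 + B * v.2 := by
  obtain ⟨cN, hcN, hlow⟩ := nm_lower hN
  set Ball : Set (ℝ × ℝ) := {z | N z ≤ ρ} with hBall
  have hBallsub : Ball ⊆ Metric.closedBall 0 (ρ / cN) := by
    intro z hz
    simp only [Metric.mem_closedBall, dist_zero_right]
    have h1 := hlow z
    have h2 : N z ≤ ρ := hz
    rw [le_div_iff₀ hcN]
    linarith [mul_comm cN ‖z‖ ▸ h1]
  have hBallclosed : IsClosed Ball := IsClosed.preimage (nm_cont hN) isClosed_Iic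
  have hBallcomp : IsCompact Ball :=
    (isCompact_closedBall 0 _).of_isClosed_subset hBallclosed hBallsub
  have hBallne : Ball.Nonempty := ⟨0, by simp only [hBall, mem_setOf_eq, nm_zero hN]; linarith⟩
  have hnfc : Continuous (fun z : ℝ × ℝ => A * z.1 + B * z.2) := by fun_prop
  obtain ⟨c, hcB, hcmax'⟩ := hBallcomp.exists_isMaxOn hBallne hnfc.continuousOn
  have hcmax : ∀ w ∈ Ball, A * w.1 + B * w.2 ≤ A * c.1 + B * c.2 := fun w hw => hcmax' hw
  have hABne : ((A, B) : ℝ × ℝ) ≠ 0 := by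
    intro h
    exact hAB ⟨congrArg Prod.fst h, congrArg Prod.snd h⟩
  have hNw : 0 < N (A, B) := by
    rcases (nm_nonneg hN ((A,B) : ℝ × ℝ)).lt_or_eq with h | h
    · exact h
    · exact absurd ((hN.1 _).1 h.symm) hABne
  have hAB2 : 0 < A ^ 2 + B ^ 2 := by
    rcases not_and_or.mp hAB with h | h
    · positivity
    · positivity
  have hint : ∀ z : ℝ × ℝ, N z < ρ → A * z.1 + B * z.2 < A * c.1 + B * c.2 := by
    intro z hz
    set ε := (ρ - N z) / (2 * N (A, B)) with hε'
    have hε : 0 < ε := div_pos (by linarith) (by linarith)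
    have hmem : z + ε • ((A, B) : ℝ × ℝ) ∈ Ball := by
      have h1 : N (z + ε • ((A, B) : ℝ × ℝ)) ≤ N z + N (ε • ((A, B) : ℝ × ℝ)) := hN.2.2 _ _
      have h2 : N (ε • ((A, B) : ℝ × ℝ)) = ε * N (A, B) := nm_smul_nonneg hN hε.le _
      have h3 : ε * N (A, B) = (ρ - N z) / 2 := by
        rw [hε']; field_simp
      show N (z + ε • ((A, B) : ℝ × ℝ)) ≤ ρ
      rw [h2, h3] at h1
      linarith
    have h2 := hcmax _ hmem
    have h3 : A * (z + ε • ((A, B) : ℝ × ℝ)).1 + B * (z + ε • ((A, B) : ℝ × ℝ)).2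
        = A * z.1 + B * z.2 + ε * (A ^ 2 + B ^ 2) := by
      simp only [Prod.fst_add, Prod.snd_add, Prod.smul_fst, Prod.smul_snd, smul_eq_mul]
      ring
    nlinarith
  have hNc : N c = ρ := by
    rcases (show N c ≤ ρ from hcB).lt_or_eq with h | h
    · exact absurd (hint c h) (lt_irrefl _)
    · exact h
  set dv : ℝ × ℝ := (-B, A) with hdv'
  have hdvne : dv ≠ 0 := by
    intro h
    exact hAB ⟨congrArg Prod.snd h, by simpa [hdv'] using congrArg Prod.fst h⟩
  have hNdv : 0 < N dv := by
    rcases (nm_nonneg hN dv).lt_or_eq with h | h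
    · exact h
    · exact absurd ((hN.1 _).1 h.symm) hdvne
  have hline : ∀ s : ℝ, A * (c + s • dv).1 + B * (c + s • dv).2 = A * c.1 + B * c.2 := by
    intro s
    simp only [hdv', Prod.fst_add, Prod.snd_add, Prod.smul_fst, Prod.smul_snd, smul_eq_mul]
    ring
  have honline : ∀ z : ℝ × ℝ, A * z.1 + B * z.2 = A * c.1 + B * c.2 → ρ ≤ N z := by
    intro z hz
    by_contra h
    push_neg at h
    exact absurd (hz ▸ hint z h) (lt_irrefl _)
  have hφc : Continuous (fun t : ℝ => N (c + t • dv)) := by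
    apply (nm_cont hN).comp
    fun_prop
  have hgrow : ∀ t : ℝ, |t| * N dv - ρ ≤ N (c + t • dv) := by
    intro t
    have h1 : N (t • dv) ≤ N (c + t • dv) + N (t • dv - (c + t • dv)) := nm_sub hN _ _
    have h2 : t • dv - (c + t • dv) = -c := by abel
    have h3 : N (-c) = N c := by
      have := hN.2.1 (-1) c
      simpa using this
    rw [h2, h3, hNc] at h1
    have h4 : N (t • dv) = |t| * N dv := hN.2.1 t dv
    linarith [h4 ▸ h1]
  set T : ℝ := (1 + ρ) / N dv with hT'
  have hT : 0 < T := by positivity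
  have hφT : 1 ≤ N (c + T • dv) := by
    have := hgrow T
    have h2 : |T| * N dv = 1 + ρ := by
      rw [abs_of_pos hT, hT']
      field_simp
    linarith
  have hφT' : 1 ≤ N (c + (-T) • dv) := by
    have := hgrow (-T)
    have h2 : |(-T)| * N dv = 1 + ρ := by
      rw [abs_neg, abs_of_pos hT, hT']
      field_simp
    linarith
  have hφ0 : N (c + (0:ℝ) • dv) = ρ := by simpa using hNc
  obtain ⟨tp, htpI, htp⟩ : ∃ t ∈ Icc (0:ℝ) T, N (c + t • dv) = 1 := by
    have := intermediate_value_Icc hT.le hφc.continuousOn (a := 0) (b := T)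
    have hm : (1:ℝ) ∈ Icc (N (c + (0:ℝ) • dv)) (N (c + T • dv)) := by
      rw [hφ0]; exact ⟨hρ1.le, hφT⟩
    obtain ⟨t, ht, hv⟩ := this hm
    exact ⟨t, ht, hv⟩
  obtain ⟨tm, htmI, htm⟩ : ∃ t ∈ Icc (-T) (0:ℝ), N (c + t • dv) = 1 := by
    have := intermediate_value_Icc' (by linarith : -T ≤ (0:ℝ)) hφc.continuousOn
    have hm : (1:ℝ) ∈ Icc (N (c + (0:ℝ) • dv)) (N (c + (-T) • dv)) := by
      rw [hφ0]; exact ⟨hρ1.le, hφT'⟩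
    obtain ⟨t, ht, hv⟩ := this hm
    exact ⟨t, ht, hv⟩
  have htp0 : 0 < tp := by
    rcases htpI.1.lt_or_eq with h | h
    · exact h
    · rw [← h] at htp; rw [hφ0] at htp; linarith
  have htm0 : tm < 0 := by
    rcases htmI.2.lt_or_eq with h | h
    · exact h
    · rw [h] at htm; rw [hφ0] at htm; linarith
  set u : ℝ × ℝ := c + tm • dv with hu'
  set v : ℝ × ℝ := c + tp • dv with hv'
  have hcomb : ∀ t : ℝ, (1 - t) • u + t • v = c + ((1 - t) * tm + t * tp) • dv := by
    intro t
    rw [hu', hv']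
    module
  have hseg : segInf N u v = ρ := by
    have hlb : ∀ r ∈ (fun t : ℝ => N ((1 - t) • u + t • v)) '' Icc (0:ℝ) 1, ρ ≤ r := by
      rintro r ⟨t, _, rfl⟩
      show ρ ≤ N ((1 - t) • u + t • v)
      rw [hcomb]
      exact honline _ (hline _)
    apply le_antisymm
    · apply csInf_le ⟨ρ, hlb⟩
      set t0 : ℝ := tm / (tm - tp) with ht0'
      have hd : tm - tp < 0 := by linarith
      have ht0d : t0 * (tm - tp) = tm := div_mul_cancel₀ _ hd.ne
      have ht00 : 0 ≤ t0 := by nlinarith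
      have ht01 : t0 ≤ 1 := by nlinarith
      refine ⟨t0, ⟨ht00, ht01⟩, ?_⟩
      show N ((1 - t0) • u + t0 • v) = ρ
      rw [hcomb]
      have : (1 - t0) * tm + t0 * tp = 0 := by nlinarith
      rw [this]
      simpa using hNc
    · exact le_csInf ((Set.nonempty_Icc.mpr (by norm_num)).image _) hlb
  have hNu : N u = 1 := htm
  have hNv : N v = 1 := htp
  have hm := hP u v hNu hNv hseg
  refine ⟨u, v, hNu, hNv, hm, ?_, ?_⟩
  · intro w hw
    have := hcmax w hw
    rw [hu', hline tm]
    exact this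
  · rw [hu', hv', hline tm, hline tp]

set_option maxHeartbeats 2000000 in
lemma core (hN : IsNorm N) {ρ : ℝ} (hρ0 : 0 < ρ) (hρ1 : ρ < 1) (hP : PropP N ρ)
    {x d : ℝ × ℝ} (hdne : d ≠ 0) (hx : N x = 1)
    {A B : ℝ} (hABne : ¬(A = 0 ∧ B = 0)) (hABd : A * d.1 + B * d.2 = 0)
    (hsupp : ∀ z : ℝ × ℝ, N z ≤ ρ → A * z.1 + B * z.2 ≤ ρ * (A * x.1 + B * x.2))
    {α β a b : ℝ} (hαβ : α < β)
    (hgα : N (x + α • d) = 1) (hgβ : N (x + β • d) = 1)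
    (hsol : ∀ s : ℝ, N (x + s • d) = 1/ρ → s = a ∨ s = b) : False := by
  obtain ⟨cN, hcN, hlow⟩ := nm_lower hN
  have hD : 0 < d.1 ^ 2 + d.2 ^ 2 := by
    have : d.1 ≠ 0 ∨ d.2 ≠ 0 := by
      by_contra hc; push_neg at hc; exact hdne (Prod.ext hc.1 hc.2)
    rcases this with h | h <;> positivity
  set D : ℝ := d.1 ^ 2 + d.2 ^ 2 with hD'
  set G : ℝ × ℝ → ℝ := fun z => (d.1 * z.1 + d.2 * z.2) / D with hG'
  set F : ℝ × ℝ → ℝ := fun z => A * z.1 + B * z.2 with hF'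
  set C0 : ℝ := ρ * (A * x.1 + B * x.2) with hC0'
  have hsuppF : ∀ z : ℝ × ℝ, N z ≤ ρ → F z ≤ C0 := hsupp
  clear_value F G
  have hFρx : F (ρ • x) = C0 := by simp only [hF', hC0', Prod.smul_fst, Prod.smul_snd, smul_eq_mul]; ring
  have hNρx : N (ρ • x) = ρ := by rw [nm_smul_nonneg hN hρ0.le, hx, mul_one]
  -- the two sphere points on the base line
  set u0 : ℝ × ℝ := ρ • (x + a • d) with hu0'
  set v0 : ℝ × ℝ := ρ • (x + b • d) with hv0'
  set m0 : ℝ × ℝ := (1/2 : ℝ) • u0 + (1/2 : ℝ) • v0 with hm0'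
  -- two-point lemma
  have htwo : ∀ z : ℝ × ℝ, N z = 1 → F z = C0 → z = u0 ∨ z = v0 := by
    intro z h1 h2
    have h4 : A * (z - ρ • x).1 + B * (z - ρ • x).2 = 0 := by
      simp only [Prod.fst_sub, Prod.snd_sub, Prod.smul_fst, Prod.smul_snd, smul_eq_mul]
      simp only [hF', hC0'] at h2
      linarith [h2]
    have h3 : d.1 * (z - ρ • x).2 - d.2 * (z - ρ • x).1 = 0 := wlem hABne hABd h4
    obtain ⟨t, ht⟩ := klem hdne h3
    have hz' : z = ρ • (x + (t/ρ) • d) := by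
      have h5 : z = ρ • x + t • d := by
        have := sub_eq_iff_eq_add.mp ht
        rw [this]; abel
      rw [h5, smul_add, smul_smul]
      rw [mul_div_cancel₀ _ hρ0.ne']
    have hgs : N (x + (t/ρ) • d) = 1/ρ := by
      have h6 : N z = ρ * N (x + (t/ρ) • d) := by
        rw [hz', nm_smul_nonneg hN hρ0.le]
      rw [h1] at h6
      field_simp
      linarith
    rcases hsol _ hgs with h | h
    · left; rw [hz', h]
    · right; rw [hz', h]
  -- per-theta chords
  have key : ∀ θ : ℝ, θ ≠ 0 → ∃ u v : ℝ × ℝ, N u = 1 ∧ N v = 1 ∧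
      N ((1/2:ℝ) • u + (1/2:ℝ) • v) = ρ ∧
      (∀ w : ℝ × ℝ, N w ≤ ρ → F w + θ * G w ≤ F u + θ * G u) ∧
      (F u + θ * G u = F v + θ * G v) := by
    intro θ hθ
    have hrepr : ∀ z : ℝ × ℝ, (A + θ*d.1/D) * z.1 + (B + θ*d.2/D) * z.2 = F z + θ * G z := by
      intro z
      simp only [hF', hG']
      field_simp
      ring
    have hABne' : ¬((A + θ*d.1/D) = 0 ∧ (B + θ*d.2/D) = 0) := by
      rintro ⟨h1, h2⟩
      have hc : (A + θ*d.1/D) * d.1 + (B + θ*d.2/D) * d.2 = θ := by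
        have he : (A + θ*d.1/D) * d.1 + (B + θ*d.2/D) * d.2
            = (A*d.1 + B*d.2) + θ*(d.1^2+d.2^2)/D := by ring
        rw [he, hABd, ← hD', mul_div_assoc, div_self hD.ne', mul_one, zero_add]
      rw [h1, h2] at hc
      simp at hc
      exact hθ hc.symm
    obtain ⟨u, v, h1, h2, h3, h4, h5⟩ := chord hN hρ0 hρ1 hP hABne'
    refine ⟨u, v, h1, h2, h3, fun w hw => ?_, ?_⟩
    · rw [← hrepr, ← hrepr]; exact h4 w hw
    · rw [← hrepr, ← hrepr]; exact h5
  have key' : ∀ θ : ℝ, ∃ u v : ℝ × ℝ, θ ≠ 0 → (N u = 1 ∧ N v = 1 ∧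
      N ((1/2:ℝ) • u + (1/2:ℝ) • v) = ρ ∧
      (∀ w : ℝ × ℝ, N w ≤ ρ → F w + θ * G w ≤ F u + θ * G u) ∧
      (F u + θ * G u = F v + θ * G v)) := by
    intro θ
    rcases eq_or_ne θ 0 with h | h
    · exact ⟨0, 0, fun h' => absurd h h'⟩
    · obtain ⟨u, v, hs⟩ := key θ h
      exact ⟨u, v, fun _ => hs⟩
  choose U V hUV using key'
  -- bounds
  have hsphb : ∀ z : ℝ × ℝ, N z = 1 → ‖z‖ ≤ 1/cN := by
    intro z hz
    have h1 := hlow z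
    rw [hz] at h1
    rw [le_div_iff₀ hcN]
    linarith [mul_comm cN ‖z‖]
  have hGb : ∀ z : ℝ × ℝ, |G z| ≤ ((|d.1| + |d.2|)/D) * ‖z‖ := by
    intro z
    have h1 : |z.1| ≤ ‖z‖ := by simpa [Real.norm_eq_abs] using norm_fst_le z
    have h2 : |z.2| ≤ ‖z‖ := by simpa [Real.norm_eq_abs] using norm_snd_le z
    have h3 : |d.1 * z.1 + d.2 * z.2| ≤ (|d.1| + |d.2|) * ‖z‖ := by
      calc |d.1 * z.1 + d.2 * z.2| ≤ |d.1 * z.1| + |d.2 * z.2| := abs_add_le _ _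
        _ = |d.1| * |z.1| + |d.2| * |z.2| := by rw [abs_mul, abs_mul]
        _ ≤ |d.1| * ‖z‖ + |d.2| * ‖z‖ := by
            have := abs_nonneg d.1
            have := abs_nonneg d.2
            nlinarith
        _ = (|d.1| + |d.2|) * ‖z‖ := by ring
    rw [hG']
    show |(d.1 * z.1 + d.2 * z.2) / D| ≤ (|d.1| + |d.2|)/D * ‖z‖
    rw [abs_div, abs_of_pos hD, div_mul_eq_mul_div]
    gcongr
  set CG : ℝ := (|d.1| + |d.2|)/D with hCG'
  have hCG0 : 0 ≤ CG := by positivity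
  set R : ℝ := 1/cN with hR'
  set E : ℝ := |G (ρ • x)| + CG * R with hE'
  have hFbnd : ∀ θ : ℝ, θ ≠ 0 → |F (U θ) - C0| ≤ |θ| * E ∧ |F (V θ) - C0| ≤ |θ| * E := by
    intro θ hθ
    obtain ⟨hNu, hNv, hNm, hmax, heq⟩ := hUV θ hθ
    have hGu : |G (U θ)| ≤ CG * R := by
      have h1 := hGb (U θ)
      have h2 := hsphb _ hNu
      nlinarith [abs_nonneg (G (U θ))]
    have hGv : |G (V θ)| ≤ CG * R := by
      have h1 := hGb (V θ)
      have h2 := hsphb _ hNv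
      nlinarith [abs_nonneg (G (V θ))]
    have hlow1 : C0 + θ * G (ρ • x) ≤ F (U θ) + θ * G (U θ) := by
      have := hmax (ρ • x) (le_of_eq hNρx)
      rw [hFρx] at this
      exact this
    have hlow2 : C0 + θ * G (ρ • x) ≤ F (V θ) + θ * G (V θ) := by
      have hcopy := hlow1
      rw [heq] at hcopy
      exact hcopy
    have hmF : F ((1/2:ℝ) • U θ + (1/2:ℝ) • V θ) = (F (U θ) + F (V θ))/2 := by
      simp only [hF', Prod.fst_add, Prod.snd_add, Prod.smul_fst, Prod.smul_snd, smul_eq_mul]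
      ring
    have hmsupp : F ((1/2:ℝ) • U θ + (1/2:ℝ) • V θ) ≤ C0 := hsuppF _ (le_of_eq hNm)
    have habs1 : |θ * (G (ρ • x) - G (U θ))| ≤ |θ| * E := by
      rw [abs_mul]
      have : |G (ρ • x) - G (U θ)| ≤ E := by
        rw [hE']
        have := abs_sub (G (ρ • x)) (G (U θ))
        calc |G (ρ • x) - G (U θ)| ≤ |G (ρ • x)| + |G (U θ)| := abs_sub _ _
          _ ≤ |G (ρ • x)| + CG * R := by linarith
      nlinarith [abs_nonneg θ]
    have habs2 : |θ * (G (ρ • x) - G (V θ))| ≤ |θ| * E := by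
      rw [abs_mul]
      have : |G (ρ • x) - G (V θ)| ≤ E := by
        rw [hE']
        calc |G (ρ • x) - G (V θ)| ≤ |G (ρ • x)| + |G (V θ)| := abs_sub _ _
          _ ≤ |G (ρ • x)| + CG * R := by linarith
      nlinarith [abs_nonneg θ]
    have h1u : C0 - |θ| * E ≤ F (U θ) := by
      have := neg_abs_le (θ * (G (ρ • x) - G (U θ)))
      nlinarith [hlow1]
    have h1v : C0 - |θ| * E ≤ F (V θ) := by
      have := neg_abs_le (θ * (G (ρ • x) - G (V θ)))
      nlinarith [hlow2]
    have hsum : F (U θ) + F (V θ) ≤ 2 * C0 := by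
      have h4 := hmsupp
      rw [hmF] at h4
      linarith
    have h2u : F (U θ) ≤ C0 + |θ| * E := by linarith
    have h2v : F (V θ) ≤ C0 + |θ| * E := by linarith
    constructor <;> rw [abs_le] <;> constructor <;> linarith
  -- subsequence limit lemma
  have hseq : ∀ θs : ℕ → ℝ, (∀ k, θs k ≠ 0) → Tendsto θs atTop (nhds 0) →
      ∃ φ : ℕ → ℕ, StrictMono φ ∧
        Tendsto (fun k => (1/2:ℝ) • U (θs (φ k)) + (1/2:ℝ) • V (θs (φ k))) atTop (nhds m0) := by
    intro θs hne0 hlim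
    have hmem : ∀ k, (U (θs k), V (θs k)) ∈
        (Metric.closedBall (0:ℝ×ℝ) R) ×ˢ (Metric.closedBall (0:ℝ×ℝ) R) := by
      intro k
      obtain ⟨hNu, hNv, _, _, _⟩ := hUV _ (hne0 k)
      exact Set.mem_prod.mpr ⟨mem_closedBall_zero_iff.mpr (hsphb _ hNu),
        mem_closedBall_zero_iff.mpr (hsphb _ hNv)⟩
    obtain ⟨l, _, φ, hφ, hφlim⟩ :=
      ((isCompact_closedBall (0:ℝ×ℝ) R).prod (isCompact_closedBall (0:ℝ×ℝ) R)).tendsto_subseq hmem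
    have hulim : Tendsto (fun k => U (θs (φ k))) atTop (nhds l.1) :=
      (continuous_fst.tendsto l).comp hφlim
    have hvlim : Tendsto (fun k => V (θs (φ k))) atTop (nhds l.2) :=
      (continuous_snd.tendsto l).comp hφlim
    have hθφ : Tendsto (fun k => θs (φ k)) atTop (nhds 0) := hlim.comp hφ.tendsto_atTop
    have hNl1 : N l.1 = 1 := by
      have h1 : Tendsto (fun k => N (U (θs (φ k)))) atTop (nhds (N l.1)) :=
        ((nm_cont hN).tendsto _).comp hulim
      have h2 : (fun k => N (U (θs (φ k)))) = fun _ => (1:ℝ) :=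
        funext fun k => (hUV _ (hne0 (φ k))).1
      rw [h2] at h1
      exact tendsto_nhds_unique h1 tendsto_const_nhds
    have hNl2 : N l.2 = 1 := by
      have h1 : Tendsto (fun k => N (V (θs (φ k)))) atTop (nhds (N l.2)) :=
        ((nm_cont hN).tendsto _).comp hvlim
      have h2 : (fun k => N (V (θs (φ k)))) = fun _ => (1:ℝ) :=
        funext fun k => (hUV _ (hne0 (φ k))).2.1
      rw [h2] at h1
      exact tendsto_nhds_unique h1 tendsto_const_nhds
    have hFc : Continuous F := by rw [hF']; fun_prop
    have hGc : Continuous G := by rw [hG']; fun_prop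
    have hθabs : Tendsto (fun k => |θs (φ k)| * E) atTop (nhds 0) := by
      have h1 : Tendsto (fun k => |θs (φ k)|) atTop (nhds 0) := by
        have := hθφ.abs
        simpa using this
      simpa using h1.mul_const E
    have hFl1 : F l.1 = C0 := by
      have h1 : Tendsto (fun k => F (U (θs (φ k))) - C0) atTop (nhds 0) := by
        apply squeeze_zero_norm (fun k => ?_) hθabs
        rw [Real.norm_eq_abs]
        exact (hFbnd _ (hne0 (φ k))).1
      have h2 : Tendsto (fun k => F (U (θs (φ k))) - C0) atTop (nhds (F l.1 - C0)) :=
        ((hFc.tendsto _).comp hulim).sub_const C0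
      have h3 := tendsto_nhds_unique h2 h1
      linarith
    have hFl2 : F l.2 = C0 := by
      have h1 : Tendsto (fun k => F (V (θs (φ k))) - C0) atTop (nhds 0) := by
        apply squeeze_zero_norm (fun k => ?_) hθabs
        rw [Real.norm_eq_abs]
        exact (hFbnd _ (hne0 (φ k))).2
      have h2 : Tendsto (fun k => F (V (θs (φ k))) - C0) atTop (nhds (F l.2 - C0)) :=
        ((hFc.tendsto _).comp hvlim).sub_const C0
      have h3 := tendsto_nhds_unique h2 h1
      linarith
    have hmlim : Tendsto (fun k => (1/2:ℝ) • U (θs (φ k)) + (1/2:ℝ) • V (θs (φ k))) atTop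
        (nhds ((1/2:ℝ) • l.1 + (1/2:ℝ) • l.2)) :=
      (hulim.const_smul _).add (hvlim.const_smul _)
    have hNml : N ((1/2:ℝ) • l.1 + (1/2:ℝ) • l.2) = ρ := by
      have h1 : Tendsto (fun k => N ((1/2:ℝ) • U (θs (φ k)) + (1/2:ℝ) • V (θs (φ k)))) atTop
          (nhds (N ((1/2:ℝ) • l.1 + (1/2:ℝ) • l.2))) := ((nm_cont hN).tendsto _).comp hmlim
      have h2 : (fun k => N ((1/2:ℝ) • U (θs (φ k)) + (1/2:ℝ) • V (θs (φ k)))) = fun _ => ρ :=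
        funext fun k => (hUV _ (hne0 (φ k))).2.2.1
      rw [h2] at h1
      exact tendsto_nhds_unique h1 tendsto_const_nhds
    have hl12 : l.1 ≠ l.2 := by
      intro h
      rw [h] at hNml
      have he : (1/2:ℝ) • l.2 + (1/2:ℝ) • l.2 = l.2 := by module
      rw [he, hNl2] at hNml
      linarith
    have hmeq : (1/2:ℝ) • l.1 + (1/2:ℝ) • l.2 = m0 := by
      rcases htwo l.1 hNl1 hFl1 with h1 | h1 <;> rcases htwo l.2 hNl2 hFl2 with h2 | h2
      · exact absurd (h1.trans h2.symm) hl12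
      · rw [h1, h2]
      · rw [h1, h2, hm0']
        module
      · exact absurd (h1.trans h2.symm) hl12
    exact ⟨φ, hφ, hmeq ▸ hmlim⟩
  -- G inequality along each chord
  have hGineq : ∀ θ : ℝ, θ ≠ 0 → ∀ s : ℝ, N (x + s • d) = 1 →
      0 ≤ θ * (G ((1/2:ℝ) • U θ + (1/2:ℝ) • V θ) - G (ρ • (x + s • d))) := by
    intro θ hθ s hgs
    obtain ⟨hNu, hNv, hNm, hmax, heq⟩ := hUV θ hθ
    have hNw : N (ρ • (x + s • d)) ≤ ρ := by
      rw [nm_smul_nonneg hN hρ0.le, hgs, mul_one]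
    have hFw : F (ρ • (x + s • d)) = C0 := by
      simp only [hF', hC0', Prod.smul_fst, Prod.smul_snd, Prod.fst_add, Prod.snd_add,
        smul_eq_mul]
      linear_combination ρ * s * hABd
    have h1 : F (ρ • (x + s • d)) + θ * G (ρ • (x + s • d)) ≤ F (U θ) + θ * G (U θ) :=
      hmax _ hNw
    have hmF : F ((1/2:ℝ) • U θ + (1/2:ℝ) • V θ) = (F (U θ) + F (V θ))/2 := by
      simp only [hF', Prod.fst_add, Prod.snd_add, Prod.smul_fst, Prod.smul_snd, smul_eq_mul]
      ring
    have hmG : G ((1/2:ℝ) • U θ + (1/2:ℝ) • V θ) = (G (U θ) + G (V θ))/2 := by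
      simp only [hG', Prod.fst_add, Prod.snd_add, Prod.smul_fst, Prod.smul_snd, smul_eq_mul]
      ring
    have hFmC : F ((1/2:ℝ) • U θ + (1/2:ℝ) • V θ) ≤ C0 := hsuppF _ (le_of_eq hNm)
    have h2 : F (U θ) + θ * G (U θ)
        = F ((1/2:ℝ) • U θ + (1/2:ℝ) • V θ) + θ * G ((1/2:ℝ) • U θ + (1/2:ℝ) • V θ) := by
      rw [hmF, hmG]
      linear_combination heq / 2
    have h3 : F (ρ • (x + s • d)) + θ * G (ρ • (x + s • d))
        ≤ F ((1/2:ℝ) • U θ + (1/2:ℝ) • V θ) + θ * G ((1/2:ℝ) • U θ + (1/2:ℝ) • V θ) :=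
      le_trans h1 (le_of_eq h2)
    have h4 : θ * (G ((1/2:ℝ) • U θ + (1/2:ℝ) • V θ) - G (ρ • (x + s • d)))
        = (F ((1/2:ℝ) • U θ + (1/2:ℝ) • V θ) + θ * G ((1/2:ℝ) • U θ + (1/2:ℝ) • V θ))
          - (F (ρ • (x + s • d)) + θ * G (ρ • (x + s • d))) + (F (ρ • (x + s • d))
          - F ((1/2:ℝ) • U θ + (1/2:ℝ) • V θ)) := by ring
    rw [h4, hFw]
    linarith [h3, hFmC]
  -- positive sequence
  have hGcont : Continuous G := by rw [hG']; fun_prop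
  have hθp : Tendsto (fun k : ℕ => 1/((k:ℝ)+1)) atTop (nhds 0) :=
    tendsto_one_div_add_atTop_nhds_zero_nat
  have hθpne : ∀ k : ℕ, 1/((k:ℝ)+1) ≠ 0 := fun k => by positivity
  obtain ⟨φp, _, hmp⟩ := hseq _ hθpne hθp
  have hup : ∀ s : ℝ, N (x + s • d) = 1 → G (ρ • (x + s • d)) ≤ G m0 := by
    intro s hgs
    have hlimG : Tendsto (fun k => G ((1/2:ℝ) • U (1/((φp k:ℝ)+1)) + (1/2:ℝ) • V (1/((φp k:ℝ)+1))))
        atTop (nhds (G m0)) := (hGcont.tendsto _).comp hmp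
    apply ge_of_tendsto hlimG
    filter_upwards with k
    have h1 := hGineq _ (hθpne (φp k)) s hgs
    have hpos : 0 < 1/((φp k:ℝ)+1) := by positivity
    nlinarith [h1]
  have hθm : Tendsto (fun k : ℕ => -(1/((k:ℝ)+1))) atTop (nhds 0) := by
    simpa using hθp.neg
  have hθmne : ∀ k : ℕ, -(1/((k:ℝ)+1)) ≠ 0 := fun k => neg_ne_zero.mpr (hθpne k)
  obtain ⟨φm, _, hmm⟩ := hseq _ hθmne hθm
  have hdown : ∀ s : ℝ, N (x + s • d) = 1 → G m0 ≤ G (ρ • (x + s • d)) := by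
    intro s hgs
    have hlimG : Tendsto (fun k => G ((1/2:ℝ) • U (-(1/((φm k:ℝ)+1))) + (1/2:ℝ) • V (-(1/((φm k:ℝ)+1)))))
        atTop (nhds (G m0)) := (hGcont.tendsto _).comp hmm
    apply le_of_tendsto hlimG
    filter_upwards with k
    have h1 := hGineq _ (hθmne (φm k)) s hgs
    have hpos : 0 < 1/((φm k:ℝ)+1) := by positivity
    nlinarith [h1]
  have e1 := hup α hgα
  have e2 := hup β hgβ
  have e3 := hdown α hgα
  have e4 := hdown β hgβ
  have heqG : G (ρ • (x + α • d)) = G (ρ • (x + β • d)) := le_antisymm (by linarith) (by linarith)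
  have hdiff : G (ρ • (x + α • d)) - G (ρ • (x + β • d)) = ρ * (α - β) := by
    have h1 : G (ρ • (x + α • d)) - G (ρ • (x + β • d)) = ρ * (α - β) * (d.1^2 + d.2^2) / D := by
      simp only [hG', Prod.smul_fst, Prod.smul_snd, Prod.fst_add, Prod.snd_add, smul_eq_mul]
      ring
    rw [h1, ← hD', mul_div_assoc, div_self hD.ne', mul_one]
  rw [heqG] at hdiff
  have hzero : ρ * (α - β) = 0 := by rw [← hdiff]; ring
  have hneg : 0 < ρ * (β - α) := mul_pos hρ0 (sub_pos.mpr hαβ)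
  nlinarith [hzero, hneg]

end Aux

section Aux2
variable {N : ℝ × ℝ → ℝ}

-- convexity along a line: generic inequality
lemma gcv (hN : IsNorm N) (x d : ℝ × ℝ) {s1 s2 t : ℝ} (h0 : 0 ≤ t) (h1 : t ≤ 1) :
    N (x + ((1 - t) * s1 + t * s2) • d) ≤ (1 - t) * N (x + s1 • d) + t * N (x + s2 • d) := by
  have he : (1 - t) • (x + s1 • d) + t • (x + s2 • d) = x + ((1 - t) * s1 + t * s2) • d := by
    module
  have := nm_conv hN (x + s1 • d) (x + s2 • d) h0 h1
  rw [he] at this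
  exact this

-- strict midpoint bound, increasing case
lemma midval (hN : IsNorm N) (x d : ℝ × ℝ) {s1 s2 sm v1 v2 : ℝ}
    (h1 : s1 < sm) (h2 : sm < s2) (g1 : N (x + s1 • d) = v1)
    (g2 : N (x + s2 • d) = v2) (hvv : v1 < v2) :
    N (x + sm • d) < v2 := by
  set t : ℝ := (sm - s1) / (s2 - s1) with ht'
  have hd0 : 0 < s2 - s1 := by linarith
  have ht0 : 0 ≤ t := div_nonneg (by linarith) hd0.le
  have ht1 : t < 1 := by rw [div_lt_one hd0]; linarith
  have hco : (1 - t) * s1 + t * s2 = sm := by rw [ht']; field_simp; ring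
  have hg := gcv hN x d (s1 := s1) (s2 := s2) ht0 ht1.le
  rw [hco, g1, g2] at hg
  nlinarith
-- strict midpoint bound, decreasing case
lemma midval' (hN : IsNorm N) (x d : ℝ × ℝ) {s1 s2 sm v1 v2 : ℝ}
    (h1 : s1 < sm) (h2 : sm < s2) (g1 : N (x + s1 • d) = v1)
    (g2 : N (x + s2 • d) = v2) (hvv : v2 < v1) :
    N (x + sm • d) < v1 := by
  set t : ℝ := (sm - s1) / (s2 - s1) with ht'
  have hd0 : 0 < s2 - s1 := by linarith
  have ht0 : 0 < t := div_pos (by linarith) hd0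
  have ht1 : t ≤ 1 := by rw [div_le_one hd0]; linarith
  have hco : (1 - t) * s1 + t * s2 = sm := by rw [ht']; field_simp; ring
  have hg := gcv hN x d (s1 := s1) (s2 := s2) ht0.le ht1
  rw [hco, g1, g2] at hg
  nlinarith

lemma scale_ext (hN : IsNorm N) {ρ C0 : ℝ} (hρ0 : 0 < ρ) {F : ℝ × ℝ → ℝ}
    (hFsm : ∀ (s : ℝ) (z : ℝ × ℝ), 0 ≤ s → F (s • z) = s * F z)
    (h : ∀ z, N z < ρ → F z ≤ C0) : ∀ z, N z ≤ ρ → F z ≤ C0 := by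
  intro z hz
  have hterm : ∀ n : ℕ, (1 - 1/((n:ℝ)+1)) * F z ≤ C0 := by
    intro n
    have hn0 : (0:ℝ) < (n:ℝ) + 1 := by positivity
    have hs0 : 0 ≤ 1 - 1/((n:ℝ)+1) := by
      have : 1/((n:ℝ)+1) ≤ 1 := by
        rw [div_le_one hn0]
        have : (0:ℝ) ≤ (n:ℝ) := Nat.cast_nonneg n
        linarith
      linarith
    have hs1 : 1 - 1/((n:ℝ)+1) < 1 := by
      have : 0 < 1/((n:ℝ)+1) := by positivity
      linarith
    have hNz : N ((1 - 1/((n:ℝ)+1)) • z) < ρ := by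
      rw [nm_smul_nonneg hN hs0]
      nlinarith [nm_nonneg hN z]
    have h2 := h _ hNz
    rw [hFsm _ _ hs0] at h2
    exact h2
  have hlim : Tendsto (fun n : ℕ => (1 - 1/((n:ℝ)+1)) * F z) atTop (nhds (F z)) := by
    have h1 : Tendsto (fun n : ℕ => 1 - 1/((n:ℝ)+1)) atTop (nhds 1) := by
      simpa using tendsto_const_nhds.sub (tendsto_one_div_add_atTop_nhds_zero_nat : Tendsto (fun n : ℕ => 1/((n:ℝ)+1)) atTop (nhds 0))
    simpa using h1.mul_const (F z)
  exact le_of_tendsto hlim (Filter.Eventually.of_forall hterm)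

end Aux2

set_option maxHeartbeats 1600000 in
/-- (P-ρS) implies strict convexity. -/
theorem stmt_3 (N : ℝ × ℝ → ℝ) (hN : IsNorm N) (ρ : ℝ) (hρ0 : 0 < ρ) (hρ1 : ρ < 1)
    (hP : PropP N ρ) :
    ∀ x y : ℝ × ℝ, N x = 1 → N y = 1 → x ≠ y → N ((1/2 : ℝ) • (x + y)) < 1 := by
  intro x y hx hy hxy
  by_contra hlt
  push_neg at hlt
  have hmid : N ((1/2 : ℝ) • (x + y)) = 1 := by
    apply le_antisymm ?_ hlt
    have h := nm_conv hN x y (by norm_num : (0:ℝ) ≤ 1/2) (by norm_num)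
    have he : (1 - (1/2:ℝ)) • x + (1/2:ℝ) • y = (1/2:ℝ) • (x + y) := by module
    rw [he, hx, hy] at h
    linarith
  set d : ℝ × ℝ := y - x with hd'
  have hdne : d ≠ 0 := sub_ne_zero.mpr (Ne.symm hxy)
  clear_value d
  have hNd : 0 < N d := by
    rcases (nm_nonneg hN d).lt_or_eq with h | h
    · exact h
    · exact absurd ((hN.1 _).1 h.symm) hdne
  have g0 : N (x + (0:ℝ) • d) = 1 := by
    rw [show x + (0:ℝ) • d = x by module]
    exact hx
  have g1 : N (x + (1:ℝ) • d) = 1 := by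
    rw [show x + (1:ℝ) • d = y by rw [hd']; module]
    exact hy
  have gh : N (x + (1/2:ℝ) • d) = 1 := by
    rw [show x + (1/2:ℝ) • d = (1/2:ℝ) • (x + y) by rw [hd']; module]
    exact hmid
  have gge1 : ∀ s : ℝ, 1 ≤ N (x + s • d) := by
    intro s
    rcases lt_trichotomy s (1/2 : ℝ) with h | h | h
    · set t : ℝ := (1/2 - s)/(1 - s) with ht'
      have h1s : (0:ℝ) < 1 - s := by linarith
      have ht0 : 0 ≤ t := div_nonneg (by linarith) h1s.le
      have ht1 : t < 1 := by rw [div_lt_one h1s]; linarith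
      have hco : (1 - t) * s + t * 1 = 1/2 := by rw [ht']; field_simp; ring
      have hg := gcv hN x d (s1 := s) (s2 := 1) ht0 ht1.le
      rw [hco, gh, g1] at hg
      nlinarith
    · rw [h]
      exact gh.ge
    · set t : ℝ := 1/(2*s) with ht'
      have hs0 : 0 < s := by linarith
      have ht0 : 0 < t := by positivity
      have ht1 : t ≤ 1 := by rw [div_le_one (by linarith)]; linarith
      have hco : (1 - t) * 0 + t * s = 1/2 := by rw [ht']; field_simp; ring
      have hg := gcv hN x d (s1 := 0) (s2 := s) ht0.le ht1
      rw [hco, g0, gh] at hg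
      nlinarith
  have hgrow : ∀ s : ℝ, |s| * N d - 1 ≤ N (x + s • d) := by
    intro s
    have h1 : N (s • d) ≤ N (x + s • d) + N (s • d - (x + s • d)) := nm_sub hN _ _
    have h2 : s • d - (x + s • d) = -x := by abel
    rw [h2, nm_neg hN, hx, hN.2.1 s d] at h1
    linarith
  set K : Set ℝ := {s : ℝ | N (x + s • d) ≤ 1} with hK'
  have hgc : Continuous (fun s : ℝ => N (x + s • d)) := by
    apply (nm_cont hN).comp
    fun_prop
  have hKcl : IsClosed K := IsClosed.preimage hgc isClosed_Iic
  have hKsub : K ⊆ Metric.closedBall (0:ℝ) (2 / N d) := by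
    intro s hs
    have h1 : N (x + s • d) ≤ 1 := hs
    have h2 := hgrow s
    rw [Metric.mem_closedBall, dist_zero_right, Real.norm_eq_abs, le_div_iff₀ hNd]
    nlinarith
  have hKcomp : IsCompact K := (isCompact_closedBall 0 _).of_isClosed_subset hKcl hKsub
  have hKne : K.Nonempty := ⟨0, g0.le⟩
  set α : ℝ := sInf K with hα'
  set β : ℝ := sSup K with hβ'
  have hαK : α ∈ K := hKcomp.sInf_mem hKne
  have hβK : β ∈ K := hKcomp.sSup_mem hKne
  have gα : N (x + α • d) = 1 := le_antisymm hαK (gge1 α)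
  have gβ : N (x + β • d) = 1 := le_antisymm hβK (gge1 β)
  have hα0 : α ≤ 0 := csInf_le hKcomp.bddBelow (g0.le)
  have hβ1 : (1:ℝ) ≤ β := le_csSup hKcomp.bddAbove (g1.le)
  have hαβ : α < β := lt_of_le_of_lt hα0 (lt_of_lt_of_le one_pos hβ1)
  have hK1 : ∀ s : ℝ, α ≤ s → s ≤ β → N (x + s • d) = 1 := by
    intro s hαs hsβ
    apply le_antisymm ?_ (gge1 s)
    set t : ℝ := (s - α)/(β - α) with ht'
    have hd0 : 0 < β - α := by linarith
    have ht0 : 0 ≤ t := div_nonneg (by linarith) hd0.le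
    have ht1 : t ≤ 1 := by rw [div_le_one hd0]; linarith
    have hco : (1 - t) * α + t * β = s := by rw [ht']; field_simp; ring
    have hg := gcv hN x d (s1 := α) (s2 := β) ht0 ht1
    rw [hco, gα, gβ] at hg
    linarith
  have hr : 1 < 1/ρ := by rw [lt_div_iff₀ hρ0]; linarith
  -- existence of b > β with value 1/ρ
  obtain ⟨b, hbβ, hgb⟩ : ∃ b : ℝ, β < b ∧ N (x + b • d) = 1/ρ := by
    set T : ℝ := β + (1/ρ + 2)/(N d) with hT'
    have hT : β ≤ T := le_add_of_nonneg_right (div_nonneg (by positivity) hNd.le)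
    clear_value T
    have hβ0 : (0:ℝ) ≤ β := by linarith
    have hgT : 1/ρ ≤ N (x + T • d) := by
      have h1 := hgrow T
      rw [abs_of_nonneg (by linarith : (0:ℝ) ≤ T)] at h1
      have h2 : T * N d = β * N d + (1/ρ + 2) := by
        rw [hT']; field_simp
      nlinarith [mul_nonneg hβ0 hNd.le]
    have hiv := intermediate_value_Icc hT hgc.continuousOn
    have hm : 1/ρ ∈ Icc (N (x + β • d)) (N (x + T • d)) := ⟨by rw [gβ]; exact hr.le, hgT⟩
    obtain ⟨b, hbI, hb⟩ := hiv hm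
    simp only [] at hb
    refine ⟨b, ?_, hb⟩
    rcases hbI.1.lt_or_eq with h | h
    · exact h
    · rw [← h] at hb
      rw [gβ] at hb
      linarith
  -- existence of a < α with value 1/ρ
  obtain ⟨a, haα, hga⟩ : ∃ a : ℝ, a < α ∧ N (x + a • d) = 1/ρ := by
    set T : ℝ := α - (1/ρ + 2)/(N d) with hT'
    have hT : T ≤ α := sub_le_self _ (div_nonneg (by positivity) hNd.le)
    clear_value T
    have hgT : 1/ρ ≤ N (x + T • d) := by
      have h1 := hgrow T
      have hTneg : T ≤ 0 := by
        have : 0 ≤ (1/ρ + 2)/(N d) := div_nonneg (by positivity) hNd.le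
        linarith
      rw [abs_of_nonpos hTneg] at h1
      have h2 : (-T) * N d = (-α) * N d + (1/ρ + 2) := by
        rw [hT']; field_simp; ring
      nlinarith [mul_nonneg (by linarith : (0:ℝ) ≤ -α) hNd.le]
    have hiv := intermediate_value_Icc' hT hgc.continuousOn
    have hm : 1/ρ ∈ Icc (N (x + α • d)) (N (x + T • d)) := ⟨by rw [gα]; exact hr.le, hgT⟩
    obtain ⟨a, haI, ha⟩ := hiv hm
    simp only [] at ha
    refine ⟨a, ?_, ha⟩
    rcases haI.2.lt_or_eq with h | h
    · exact h
    · rw [h] at ha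
      rw [gα] at ha
      linarith
  -- uniqueness of the two solutions
  have hsol : ∀ s : ℝ, N (x + s • d) = 1/ρ → s = a ∨ s = b := by
    intro s hs
    have hsK : ¬(α ≤ s ∧ s ≤ β) := by
      rintro ⟨h1, h2⟩
      rw [hK1 s h1 h2] at hs
      linarith
    rw [not_and_or] at hsK
    push_neg at hsK
    rcases hsK with h | h
    · left
      by_contra hne
      rcases lt_or_gt_of_ne hne with hlt | hgt
      · have := midval' hN x d hlt haα hs gα hr
        rw [hga] at this
        linarith
      · have := midval' hN x d hgt h hga gα hr
        rw [hs] at this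
        linarith
    · right
      by_contra hne
      rcases lt_or_gt_of_ne hne with hlt | hgt
      · have := midval hN x d h hlt gβ hgb hr
        rw [hs] at this
        linarith
      · have := midval hN x d hbβ hgt gβ hs hr
        rw [hgb] at this
        linarith
  -- the supporting functional
  have hker : ∀ z : ℝ × ℝ, d.1 * z.2 - d.2 * z.1 = ρ * (d.1 * x.2 - d.2 * x.1) → ρ ≤ N z := by
    intro z hz
    have h0 : d.1 * (z - ρ • x).2 - d.2 * (z - ρ • x).1 = 0 := by
      simp only [Prod.fst_sub, Prod.snd_sub, Prod.smul_fst, Prod.smul_snd, smul_eq_mul]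
      linarith [hz]
    obtain ⟨t, ht⟩ := klem hdne h0
    have hz' : z = ρ • (x + (t/ρ) • d) := by
      have h5 : z = ρ • x + t • d := by
        have h6 := sub_eq_iff_eq_add.mp ht
        rw [h6]; abel
      rw [h5, smul_add, smul_smul, mul_div_cancel₀ _ hρ0.ne']
    rw [hz', nm_smul_nonneg hN hρ0.le]
    nlinarith [gge1 (t/ρ)]
  have hdich0 : (∀ z : ℝ × ℝ, N z < ρ → d.1 * z.2 - d.2 * z.1 ≤ ρ * (d.1 * x.2 - d.2 * x.1)) ∨
      (∀ z : ℝ × ℝ, N z < ρ → ρ * (d.1 * x.2 - d.2 * x.1) ≤ d.1 * z.2 - d.2 * z.1) := by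
    by_contra hc
    push_neg at hc
    obtain ⟨⟨z1, hz1N, hz1⟩, ⟨z2, hz2N, hz2⟩⟩ := hc
    set ψ : ℝ → ℝ := fun t => (1 - t) * (d.1 * z2.2 - d.2 * z2.1) + t * (d.1 * z1.2 - d.2 * z1.1)
      with hψ'
    have hψc : ContinuousOn ψ (Icc (0:ℝ) 1) := by
      rw [hψ']; fun_prop
    have hiv := intermediate_value_Icc (by norm_num : (0:ℝ) ≤ 1) hψc
    have hψ0 : ψ 0 = d.1 * z2.2 - d.2 * z2.1 := by rw [hψ']; norm_num
    have hψ1 : ψ 1 = d.1 * z1.2 - d.2 * z1.1 := by rw [hψ']; norm_num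
    have hm : ρ * (d.1 * x.2 - d.2 * x.1) ∈ Icc (ψ 0) (ψ 1) := by
      rw [hψ0, hψ1]
      exact ⟨hz2.le, hz1.le⟩
    obtain ⟨t, htI, ht⟩ := hiv hm
    have hpt : d.1 * ((1 - t) • z2 + t • z1).2 - d.2 * ((1 - t) • z2 + t • z1).1
        = ρ * (d.1 * x.2 - d.2 * x.1) := by
      simp only [Prod.fst_add, Prod.snd_add, Prod.smul_fst, Prod.smul_snd, smul_eq_mul]
      rw [hψ'] at ht
      simp only at ht
      linear_combination ht
    have h5 := hker _ hpt
    have h6 : N ((1 - t) • z2 + t • z1) < ρ := by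
      have h7 := nm_conv hN z2 z1 htI.1 htI.2
      rcases lt_or_eq_of_le htI.2 with h9 | h9
      · have e3 : (1 - t) * N z2 < (1 - t) * ρ := by
          apply mul_lt_mul_of_pos_left hz2N
          linarith
        have e4 : t * N z1 ≤ t * ρ := mul_le_mul_of_nonneg_left hz1N.le htI.1
        nlinarith
      · subst h9
        norm_num at h7
        linarith
    linarith
  rcases hdich0 with hcase | hcase
  · -- A = -d.2, B = d.1
    have hABne : ¬((-d.2 : ℝ) = 0 ∧ d.1 = 0) := by
      rintro ⟨h1, h2⟩
      refine hdne (Prod.ext ?_ ?_) <;>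
        simp only [Prod.fst_zero, Prod.snd_zero] <;> linarith
    have hABd : (-d.2) * d.1 + d.1 * d.2 = 0 := by ring
    have hsupp : ∀ z : ℝ × ℝ, N z ≤ ρ → (-d.2) * z.1 + d.1 * z.2 ≤ ρ * ((-d.2) * x.1 + d.1 * x.2) := by
      have hF := scale_ext hN hρ0 (F := fun z : ℝ × ℝ => d.1 * z.2 - d.2 * z.1)
        (C0 := ρ * (d.1 * x.2 - d.2 * x.1))
        (fun s z hs => by
          simp only [Prod.smul_fst, Prod.smul_snd, smul_eq_mul]
          ring)
        (fun z hz => hcase z hz)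
      intro z hz
      have h7 := hF z hz
      have e1 : (-d.2) * z.1 + d.1 * z.2 = d.1 * z.2 - d.2 * z.1 := by ring
      have e2 : ρ * ((-d.2) * x.1 + d.1 * x.2) = ρ * (d.1 * x.2 - d.2 * x.1) := by ring
      rw [e1, e2]
      exact h7
    exact core hN hρ0 hρ1 hP hdne hx hABne hABd hsupp hαβ gα gβ hsol
  · -- A = d.2, B = -d.1
    have hABne : ¬((d.2 : ℝ) = 0 ∧ (-d.1 : ℝ) = 0) := by
      rintro ⟨h1, h2⟩
      refine hdne (Prod.ext ?_ ?_) <;>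
        simp only [Prod.fst_zero, Prod.snd_zero] <;> linarith
    have hABd : d.2 * d.1 + (-d.1) * d.2 = 0 := by ring
    have hsupp : ∀ z : ℝ × ℝ, N z ≤ ρ → d.2 * z.1 + (-d.1) * z.2 ≤ ρ * (d.2 * x.1 + (-d.1) * x.2) := by
      have hF := scale_ext hN hρ0 (F := fun z : ℝ × ℝ => d.2 * z.1 - d.1 * z.2)
        (C0 := ρ * (d.2 * x.1 - d.1 * x.2))
        (fun s z hs => by
          simp only [Prod.smul_fst, Prod.smul_snd, smul_eq_mul]
          ring)
        (fun z hz => by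
          show d.2 * z.1 - d.1 * z.2 ≤ ρ * (d.2 * x.1 - d.1 * x.2)
          have h8 := hcase z hz
          linarith [h8])
      intro z hz
      have h7 := hF z hz
      have e1 : d.2 * z.1 + (-d.1) * z.2 = d.2 * z.1 - d.1 * z.2 := by ring
      have e2 : ρ * (d.2 * x.1 + (-d.1) * x.2) = ρ * (d.2 * x.1 - d.1 * x.2) := by ring
      rw [e1, e2]
      exact h7
    exact core hN hρ0 hρ1 hP hdne hx hABne hABd hsupp hαβ gα gβ hsol
end

section
/- Let X be a two-dimensional real normed space with unit sphere S and 0 < ρ < 1, satisfying property (P-ρS). For every u ∈ S there is a unique u⊥ ∈ S with u ≺ u⊥ such that u is Birkhoff-orthogonal to u⊥, i.e., ‖u‖ ≤ ‖u + λ u⊥‖ for all real λ. -/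
open Real Set

open Filter Topology in
/-- Auxiliary pairing used to represent linear functionals on `ℝ × ℝ`. -/
def dotp (f x : ℝ × ℝ) : ℝ := f.1 * x.1 + f.2 * x.2

namespace Stmt5

open Filter Topology

variable {N : ℝ × ℝ → ℝ}

lemma dotp_add (f x y : ℝ × ℝ) : dotp f (x + y) = dotp f x + dotp f y := by
  simp [dotp, Prod.fst_add, Prod.snd_add]; ring

lemma dotp_smul (f : ℝ × ℝ) (a : ℝ) (x : ℝ × ℝ) : dotp f (a • x) = a * dotp f x := by
  simp [dotp, Prod.smul_fst, Prod.smul_snd, smul_eq_mul]; ring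

lemma dotp_comb (f x y : ℝ × ℝ) (a b : ℝ) :
    dotp f (a • x + b • y) = a * dotp f x + b * dotp f y := by
  rw [dotp_add, dotp_smul, dotp_smul]

lemma dotp_continuous (f : ℝ × ℝ) : Continuous fun x => dotp f x := by
  unfold dotp; fun_prop

lemma N_zero (hN : IsNorm N) : N 0 = 0 := (hN.1 0).2 rfl

lemma N_nonneg (hN : IsNorm N) (x : ℝ × ℝ) : 0 ≤ N x := by
  have h := hN.2.2 x (-x)
  have h2 : N (-x) = N x := by
    have := hN.2.1 (-1) x; simpa using this
  have h0 : N 0 = 0 := N_zero hN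
  simp only [add_neg_cancel, h0, h2] at h
  linarith

lemma N_neg (hN : IsNorm N) (x : ℝ × ℝ) : N (-x) = N x := by
  have := hN.2.1 (-1) x; simpa using this

lemma N_pos (hN : IsNorm N) {x : ℝ × ℝ} (hx : x ≠ 0) : 0 < N x := by
  rcases lt_or_eq_of_le (N_nonneg hN x) with h | h
  · exact h
  · exact absurd ((hN.1 x).1 h.symm) hx

lemma N_smul_of_nonneg (hN : IsNorm N) {a : ℝ} (ha : 0 ≤ a) (x : ℝ × ℝ) :
    N (a • x) = a * N x := by
  rw [hN.2.1, abs_of_nonneg ha]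

lemma N_comb_le (hN : IsNorm N) {a b : ℝ} (ha : 0 ≤ a) (hb : 0 ≤ b) (x y : ℝ × ℝ) :
    N (a • x + b • y) ≤ a * N x + b * N y := by
  calc N (a • x + b • y) ≤ N (a • x) + N (b • y) := hN.2.2 _ _
    _ = a * N x + b * N y := by rw [N_smul_of_nonneg hN ha, N_smul_of_nonneg hN hb]

lemma N_sub_le (hN : IsNorm N) (x y : ℝ × ℝ) : N x ≤ N y + N (x - y) := by
  have := hN.2.2 y (x - y); simpa using this

lemma N_continuous (hN : IsNorm N) : Continuous N := by
  set K : ℝ := N (1, 0) + N (0, 1) with hK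
  have hK0 : 0 ≤ K := add_nonneg (N_nonneg hN _) (N_nonneg hN _)
  have hb : ∀ z : ℝ × ℝ, N z ≤ K * ‖z‖ := by
    intro z
    have hz : z = z.1 • ((1:ℝ), (0:ℝ)) + z.2 • ((0:ℝ), (1:ℝ)) := by
      ext <;> simp
    calc N z = N (z.1 • ((1:ℝ), (0:ℝ)) + z.2 • ((0:ℝ), (1:ℝ))) := by rw [← hz]
      _ ≤ N (z.1 • ((1:ℝ), (0:ℝ))) + N (z.2 • ((0:ℝ), (1:ℝ))) := hN.2.2 _ _
      _ = |z.1| * N (1, 0) + |z.2| * N (0, 1) := by rw [hN.2.1, hN.2.1]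
      _ ≤ ‖z‖ * N (1, 0) + ‖z‖ * N (0, 1) := by
          gcongr
          · exact N_nonneg hN _
          · exact norm_fst_le z
          · exact N_nonneg hN _
          · exact norm_snd_le z
      _ = K * ‖z‖ := by ring
  rw [Metric.continuous_iff]
  intro x ε hε
  refine ⟨ε / (K + 1), by positivity, fun y hy => ?_⟩
  have h1 : N y - N x ≤ N (y - x) := by have := N_sub_le hN y x; linarith
  have h2 : N x - N y ≤ N (x - y) := by have := N_sub_le hN x y; linarith
  have h3 : N (y - x) ≤ K * ‖y - x‖ := hb _
  have h4 : N (x - y) ≤ K * ‖x - y‖ := hb _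
  have h5 : ‖y - x‖ = dist y x := (dist_eq_norm y x).symm
  have h6 : ‖x - y‖ = dist y x := by rw [dist_comm]; exact (dist_eq_norm x y).symm
  have hd : dist y x < ε / (K + 1) := hy
  have : dist (N y) (N x) ≤ K * dist y x := by
    rw [Real.dist_eq, abs_sub_le_iff]
    constructor <;> nlinarith [dist_nonneg (x := y) (y := x)]
  calc dist (N y) (N x) ≤ K * dist y x := this
    _ < ε := by
        rcases eq_or_lt_of_le hK0 with h | h
        · simpa [← h] using hε
        · calc K * dist y x < K * (ε / (K+1)) := by exact (mul_lt_mul_iff_right₀ h).2 hd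
            _ < ε := by
                rw [mul_div_assoc', mul_comm, ← mul_div_assoc']
                have : ε * (K / (K+1)) < ε * 1 := by
                  apply mul_lt_mul_of_pos_left _ hε
                  rw [div_lt_one (by linarith)]; linarith
                simpa using this
  
lemma N_lower (hN : IsNorm N) : ∃ c : ℝ, 0 < c ∧ ∀ x : ℝ × ℝ, c * ‖x‖ ≤ N x := by
  have hcs : IsCompact (Metric.sphere (0 : ℝ × ℝ) 1) := isCompact_sphere 0 1
  have hne : (Metric.sphere (0 : ℝ × ℝ) 1).Nonempty := by
    refine ⟨((1:ℝ), (0:ℝ)), ?_⟩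
    simp [Prod.norm_def]
  obtain ⟨x₀, hx₀, hmin⟩ := hcs.exists_isMinOn hne (N_continuous hN).continuousOn
  have hx₀n : x₀ ≠ 0 := by
    intro h; rw [h] at hx₀; simp at hx₀
  refine ⟨N x₀, N_pos hN hx₀n, fun x => ?_⟩
  rcases eq_or_ne x 0 with rfl | hx
  · simp [N_zero hN]
  · have hnx : (0:ℝ) < ‖x‖ := norm_pos_iff.2 hx
    have hmem : ‖x‖⁻¹ • x ∈ Metric.sphere (0 : ℝ × ℝ) 1 := by
      simp [norm_smul, abs_of_pos (inv_pos.2 hnx), inv_mul_cancel₀ (ne_of_gt hnx)]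
    have := hmin hmem
    have h2 : N x = ‖x‖ * N (‖x‖⁻¹ • x) := by
      rw [hN.2.1, abs_of_pos (inv_pos.2 hnx)]
      field_simp
    rw [h2]
    calc N x₀ * ‖x‖ ≤ N (‖x‖⁻¹ • x) * ‖x‖ := by
          apply mul_le_mul_of_nonneg_right _ (le_of_lt hnx); exact this
      _ = ‖x‖ * N (‖x‖⁻¹ • x) := mul_comm _ _

lemma S_compact (hN : IsNorm N) : IsCompact {x : ℝ × ℝ | N x = 1} := by
  obtain ⟨c, hc, hcb⟩ := N_lower hN
  have hclosed : IsClosed {x : ℝ × ℝ | N x = 1} := by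
    have : {x : ℝ × ℝ | N x = 1} = N ⁻¹' {1} := rfl
    rw [this]
    exact IsClosed.preimage (N_continuous hN) isClosed_singleton
  have hsub : {x : ℝ × ℝ | N x = 1} ⊆ Metric.closedBall 0 c⁻¹ := by
    intro x hx
    simp only [Metric.mem_closedBall, dist_zero_right]
    have := hcb x
    rw [hx] at this
    rw [mul_comm] at this
    rw [← le_div_iff₀ hc] at this
    simpa [one_div] using this
  exact (isCompact_closedBall 0 c⁻¹).of_isClosed_subset hclosed hsub

lemma dotp_comb_left (f g x : ℝ × ℝ) (a b : ℝ) :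
    dotp (a • f + b • g) x = a * dotp f x + b * dotp g x := by
  simp [dotp, Prod.fst_add, Prod.snd_add, Prod.smul_fst, Prod.smul_snd, smul_eq_mul]; ring

/-- Existence of a supporting functional at any unit vector. -/
lemma exists_support (hN : IsNorm N) {z : ℝ × ℝ} (hz : N z = 1) :
    ∃ F : ℝ × ℝ, (∀ x, dotp F x ≤ N x) ∧ dotp F z = 1 := by
  have hzne : z ≠ 0 := by intro h; rw [h, N_zero hN] at hz; norm_num at hz
  set v : ℝ × ℝ := (-z.2, z.1) with hv
  set W : ℝ := z.1^2 + z.2^2 with hW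
  have hWpos : 0 < W := by
    have h : z.1 ≠ 0 ∨ z.2 ≠ 0 := by
      by_contra hcon
      push_neg at hcon
      exact hzne (Prod.ext hcon.1 hcon.2)
    rcases h with h1 | h2
    · have : 0 < z.1^2 := by positivity
      nlinarith [sq_nonneg z.2]
    · have : 0 < z.2^2 := by positivity
      nlinarith [sq_nonneg z.1]
  have hvne : v ≠ 0 := by
    intro h
    apply hzne
    have h1 : v.1 = 0 := by rw [h]; rfl
    have h2 : v.2 = 0 := by rw [h]; rfl
    simp only [hv] at h1 h2
    apply Prod.ext
    · simpa using h2
    · simpa using (neg_eq_zero.mp h1)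
  set f : ℝ → ℝ := fun τ => N (z + τ • v) with hf
  have hf0 : f 0 = 1 := by simp [hf, hz]
  -- convexity-cross-slope lemma
  have hkey : ∀ σ τ : ℝ, σ < 0 → 0 < τ → (1 - f σ)/(-σ) ≤ (f τ - 1)/τ := by
    intro σ τ hσ hτ
    have hd : 0 < τ - σ := by linarith
    set a : ℝ := τ / (τ - σ) with hadef
    set b : ℝ := -σ / (τ - σ) with hbdef
    have ha : 0 < a := div_pos hτ hd
    have hb : 0 < b := div_pos (by linarith) hd
    have hab : a + b = 1 := by rw [hadef, hbdef]; field_simp; ring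
    have hcomb : a • (z + σ • v) + b • (z + τ • v) = z := by
      have h1 : a * σ + b * τ = 0 := by rw [hadef, hbdef]; field_simp; ring
      have : a • (z + σ • v) + b • (z + τ • v)
          = (a + b) • z + (a * σ + b * τ) • v := by
        simp [smul_add, smul_smul, add_smul]; abel
      rw [this, hab, h1]; simp
    have h2 : (1:ℝ) ≤ a * f σ + b * f τ := by
      have := N_comb_le hN (le_of_lt ha) (le_of_lt hb) (z + σ • v) (z + τ • v)
      rw [hcomb, hz] at this
      exact this
    rw [div_le_div_iff₀ (by linarith) hτ]
    rw [hadef, hbdef] at h2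
    have h3 : τ - σ ≤ τ * f σ + (-σ) * f τ := by
      have h4 := mul_le_mul_of_nonneg_right h2 (le_of_lt hd)
      have h5 : (τ / (τ - σ) * f σ + -σ / (τ - σ) * f τ) * (τ - σ) = τ * f σ + (-σ) * f τ := by
        first
        | (field_simp; ring)
        | field_simp
      nlinarith
    nlinarith
  set Sl : Set ℝ := (fun τ => (f τ - 1)/τ) '' Ioi 0 with hSl
  have hSlne : Sl.Nonempty := ⟨(f 1 - 1)/1, ⟨1, by norm_num, rfl⟩⟩
  have hSlbdd : BddBelow Sl := by
    refine ⟨1 - f (-1), ?_⟩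
    rintro y ⟨τ, hτ, rfl⟩
    have := hkey (-1) τ (by norm_num) hτ
    simpa using this
  set c : ℝ := sInf Sl with hc
  have hsub : ∀ τ : ℝ, 1 + c * τ ≤ f τ := by
    intro τ
    rcases lt_trichotomy τ 0 with h | h | h
    · have hle : (1 - f τ)/(-τ) ≤ c := by
        apply le_csInf hSlne
        rintro y ⟨τ', hτ', rfl⟩
        exact hkey τ τ' h hτ'
      have h1 : 0 < -τ := by linarith
      rw [div_le_iff₀ h1] at hle
      nlinarith
    · simp [h, hf0]
    · have hle : c ≤ (f τ - 1)/τ := csInf_le hSlbdd ⟨τ, h, rfl⟩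
      rw [le_div_iff₀ h] at hle
      nlinarith
  have hcabs : |c| ≤ N v := by
    have h1 : c ≤ (f 1 - 1)/1 := csInf_le hSlbdd ⟨1, by norm_num, rfl⟩
    have h2 : f 1 ≤ 1 + N v := by
      have := hN.2.2 z ((1:ℝ) • v)
      simpa [hf, hz] using this
    have h3 : 1 + c * (-1) ≤ f (-1) := hsub (-1)
    have h4 : f (-1) ≤ 1 + N v := by
      have h5 := hN.2.2 z ((-1:ℝ) • v)
      have h6 : N ((-1:ℝ) • v) = N v := by
        rw [hN.2.1]; simp
      simp only [hf]
      calc N (z + (-1:ℝ) • v) ≤ N z + N ((-1:ℝ) • v) := h5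
        _ = 1 + N v := by rw [hz, h6]
    rw [abs_le]
    constructor <;> nlinarith
  refine ⟨W⁻¹ • z + (c * W⁻¹) • v, ?_, ?_⟩
  · intro x
    set s : ℝ := dotp z x / W with hs
    set t : ℝ := dotp v x / W with ht
    have hdec : x = s • z + t • v := by
      have hx1 : x.1 = s * z.1 + t * v.1 := by
        have hW0 : z.1^2 + z.2^2 ≠ 0 := (by linarith : 0 < z.1^2 + z.2^2).ne'
        have hW1 : z.2^2 + z.1^2 ≠ 0 := (by linarith : 0 < z.2^2 + z.1^2).ne'
        simp only [hs, ht, dotp, hv, hW]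
        field_simp
        ring
      have hx2 : x.2 = s * z.2 + t * v.2 := by
        have hW0 : z.1^2 + z.2^2 ≠ 0 := (by linarith : 0 < z.1^2 + z.2^2).ne'
        have hW1 : z.2^2 + z.1^2 ≠ 0 := (by linarith : 0 < z.2^2 + z.1^2).ne'
        simp only [hs, ht, dotp, hv, hW]
        field_simp
        ring
      ext
      · simpa using hx1
      · simpa using hx2
    have hFx : dotp (W⁻¹ • z + (c * W⁻¹) • v) x = s + t * c := by
      rw [hdec, dotp_comb, dotp_comb_left, dotp_comb_left]
      have hzz : dotp z z = W := by simp [dotp, hW]; ring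
      have hzv : dotp z v = 0 := by simp [dotp, hv]; ring
      have hvz : dotp v z = 0 := by simp [dotp, hv]; ring
      have hvv : dotp v v = W := by simp [dotp, hv, hW]; ring
      rw [hzz, hzv, hvz, hvv]
      first
      | (field_simp; ring)
      | field_simp
    rw [hFx]
    have htc : t * c ≤ |t| * N v := by
      calc t * c ≤ |t * c| := le_abs_self _
        _ = |t| * |c| := abs_mul t c
        _ ≤ |t| * N v := by
            apply mul_le_mul_of_nonneg_left hcabs (abs_nonneg t)
    rcases le_or_gt s 0 with hsle | hsgt
    · -- N x ≥ |t| N v + s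
      have h1 : N (t • v) ≤ N x + N ((-s) • z) := by
        have : t • v = x + (-s) • z := by
          rw [hdec]; module
        rw [this]
        exact hN.2.2 x ((-s) • z)
      have h2 : N (t • v) = |t| * N v := hN.2.1 t v
      have h3 : N ((-s) • z) = -s := by
        rw [hN.2.1, hz, abs_of_nonneg (by linarith)]; ring
      have : |t| * N v + s ≤ N x := by rw [h2, h3] at h1; linarith
      linarith
    · have hxs : x = s • (z + (t/s) • v) := by
        rw [hdec, smul_add, smul_smul]
        congr 2
        field_simp
      have : N x = s * f (t/s) := by
        rw [hxs, N_smul_of_nonneg hN (le_of_lt hsgt)]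
      rw [this]
      have := hsub (t/s)
      have h4 : s * (1 + c * (t/s)) ≤ s * f (t/s) :=
        mul_le_mul_of_nonneg_left this (le_of_lt hsgt)
      calc s + t * c = s * (1 + c * (t/s)) := by field_simp
        _ ≤ s * f (t/s) := h4
  · rw [dotp_comb_left]
    have hzz : dotp z z = W := by simp only [dotp, hW]; ring
    have hvz : dotp v z = 0 := by simp only [dotp, hv]; ring
    rw [hzz, hvz]
    field_simp
    ring

lemma dotp_smul_left (a : ℝ) (f x : ℝ × ℝ) : dotp (a • f) x = a * dotp f x := by
  simp only [dotp, Prod.smul_fst, Prod.smul_snd, smul_eq_mul]; ring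

lemma cramer (u w x : ℝ × ℝ) :
    wedge u w • x = wedge x w • u + wedge u x • w := by
  apply Prod.ext <;>
    simp only [wedge, Prod.smul_fst, Prod.smul_snd, Prod.fst_add, Prod.snd_add, smul_eq_mul] <;>
    ring

/-- A Birkhoff-orthogonality pair gives a supporting functional. -/
lemma support_of_birkhoff (hN : IsNorm N) {u w : ℝ × ℝ} (hu : N u = 1) (hw : N w = 1)
    (hwed : wedge u w ≠ 0) (hB : ∀ l : ℝ, N u ≤ N (u + l • w)) :
    ∃ F : ℝ × ℝ, (∀ x, dotp F x ≤ N x) ∧ dotp F u = 1 ∧ dotp F w = 0 := by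
  set W := wedge u w with hW
  have hd_u : dotp (w.2, -w.1) u = W := by simp only [dotp, hW, wedge]; ring
  have hd_w : dotp (w.2, -w.1) w = 0 := by simp only [dotp]; ring
  have hd_x : ∀ x : ℝ × ℝ, dotp (w.2, -w.1) x = wedge x w := by
    intro x; simp only [dotp, wedge]; ring
  refine ⟨W⁻¹ • (w.2, -w.1), ?_, ?_, ?_⟩
  · intro x
    set s : ℝ := wedge x w / W with hs
    set t : ℝ := wedge u x / W with ht
    have hdec : x = s • u + t • w := by
      calc x = W⁻¹ • (W • x) := by rw [smul_smul, inv_mul_cancel₀ hwed, one_smul]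
        _ = W⁻¹ • (wedge x w • u + wedge u x • w) := by rw [cramer u w x]
        _ = s • u + t • w := by
            rw [smul_add, smul_smul, smul_smul, hs, ht, div_eq_inv_mul, div_eq_inv_mul]
    have hFx : dotp (W⁻¹ • (w.2, -w.1)) x = s := by
      rw [dotp_smul_left, hd_x, hs, div_eq_inv_mul]
    rw [hFx]
    rcases le_or_gt s 0 with hsle | hsgt
    · exact le_trans hsle (N_nonneg hN x)
    · have hxs : x = s • (u + (t/s) • w) := by
        rw [hdec, smul_add, smul_smul]
        congr 2
        field_simp
      have hNx : N x = s * N (u + (t/s) • w) := by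
        rw [hxs, N_smul_of_nonneg hN (le_of_lt hsgt)]
      have := hB (t/s)
      rw [hu] at this
      nlinarith
  · rw [dotp_smul_left, hd_u, inv_mul_cancel₀ hwed]
  · rw [dotp_smul_left, hd_w, mul_zero]

lemma ker_rep {ξ d : ℝ × ℝ} (hd : dotp ξ d = 0) (hξ : ξ ≠ 0) :
    ∃ t : ℝ, d = t • (ξ.2, -ξ.1) := by
  rcases eq_or_ne ξ.1 0 with h1 | h1
  · have h2 : ξ.2 ≠ 0 := by
      intro h2; exact hξ (Prod.ext h1 h2)
    refine ⟨d.1 / ξ.2, ?_⟩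
    have hz : ξ.2 * d.2 = 0 := by
      simp only [dotp, h1] at hd; nlinarith [hd]
    have hd2 : d.2 = 0 := (mul_eq_zero.mp hz).resolve_left h2
    apply Prod.ext
    · simp only [Prod.smul_fst, smul_eq_mul]
      field_simp
    · simp only [Prod.smul_snd, smul_eq_mul, hd2, h1]
      ring
  · refine ⟨-d.2 / ξ.1, ?_⟩
    have hd1 : ξ.1 * d.1 = -(ξ.2 * d.2) := by
      simp only [dotp] at hd; linarith
    apply Prod.ext
    · simp only [Prod.smul_fst, smul_eq_mul]
      field_simp
      nlinarith [hd1]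
    · simp only [Prod.smul_snd, smul_eq_mul]
      field_simp

lemma ray_unique (hN : IsNorm N) {base d : ℝ × ℝ} (hb : N base < 1) :
    ∀ {t t' : ℝ}, 0 < t → 0 < t' → N (base + t • d) = 1 → N (base + t' • d) = 1 → t = t' := by
  have key : ∀ t t' : ℝ, 0 < t → t < t' → N (base + t' • d) = 1 → N (base + t • d) < 1 := by
    intro t t' ht htt' h1
    set θ := t / t' with hθ
    have ht' : 0 < t' := lt_trans ht htt'
    have hθ0 : 0 < θ := div_pos ht ht'
    have hθ1 : θ < 1 := (div_lt_one ht').2 htt'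
    have hcomb : base + t • d = (1 - θ) • base + θ • (base + t' • d) := by
      have : θ * t' = t := by rw [hθ]; field_simp
      rw [smul_add, smul_smul, this]
      module
    rw [hcomb]
    calc N ((1 - θ) • base + θ • (base + t' • d)) ≤ (1 - θ) * N base + θ * N (base + t' • d) :=
          N_comb_le hN (by linarith) (le_of_lt hθ0) _ _
      _ < (1 - θ) * 1 + θ * 1 := by rw [h1]; nlinarith
      _ = 1 := by ring
  intro t t' ht ht' h1 h2
  rcases lt_trichotomy t t' with h | h | h
  · exact absurd h1 (ne_of_lt (key t t' ht h h2))
  · exact h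
  · exact absurd h2 (ne_of_lt (key t' t ht' h h1))

/-- The main chord lemma: for a supporting functional `ξ` with norming point `M`,
the line `{ξ = ρ}` meets the unit sphere in exactly two points whose midpoint has norm `ρ`. -/
lemma chord_core (hN : IsNorm N) {ρ : ℝ} (hρ0 : 0 < ρ) (hρ1 : ρ < 1) (hP : PropP N ρ)
    {ξ M : ℝ × ℝ} (hle : ∀ x, dotp ξ x ≤ N x) (hM : N M = 1) (hξM : dotp ξ M = 1) :
    ∃ p q : ℝ × ℝ, N p = 1 ∧ N q = 1 ∧ dotp ξ p = ρ ∧ dotp ξ q = ρ ∧ p ≠ q ∧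
      (∀ x, N x = 1 → dotp ξ x = ρ → x = p ∨ x = q) ∧
      N ((1/2 : ℝ) • p + (1/2 : ℝ) • q) = ρ := by
  have hξ : ξ ≠ 0 := by
    intro h
    rw [h] at hξM
    simp [dotp] at hξM
  set v : ℝ × ℝ := (ξ.2, -ξ.1) with hv
  have hvne : v ≠ 0 := by
    intro h
    apply hξ
    have h1 : v.1 = 0 := by rw [h]; rfl
    have h2 : v.2 = 0 := by rw [h]; rfl
    simp only [hv] at h1 h2
    exact Prod.ext (by simpa using neg_eq_zero.mp h2) (by simpa using h1)
  have hξv : dotp ξ v = 0 := by simp [dotp, hv]; ring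
  set base : ℝ × ℝ := ρ • M with hbase
  have hbρ : N base = ρ := by
    rw [hbase, N_smul_of_nonneg hN (le_of_lt hρ0), hM, mul_one]
  have hblt : N base < 1 := by rw [hbρ]; exact hρ1
  have hNv : 0 < N v := N_pos hN hvne
  set g : ℝ → ℝ := fun s => N (base + s • v) with hg
  have hgc : Continuous g := by
    apply (N_continuous hN).comp
    fun_prop
  have hg0 : g 0 = ρ := by simp [hg, hbρ]
  have hcoer : ∀ s : ℝ, |s| * N v - ρ ≤ g s := by
    intro s
    have h1 : N (s • v) ≤ N (base + s • v) + N base := by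
      have h2 := hN.2.2 (base + s • v) (-base)
      simpa [N_neg hN] using h2
    rw [hN.2.1, hbρ] at h1
    simp only [hg]
    linarith
  set s1 : ℝ := (2 + ρ) / N v with hs1
  have hs1pos : 0 < s1 := by positivity
  have hgs1 : 1 ≤ g s1 := by
    have := hcoer s1
    rw [abs_of_pos hs1pos, hs1] at this
    have h2 : (2 + ρ) / N v * N v = 2 + ρ := by field_simp
    rw [h2] at this
    linarith
  have hgs1' : 1 ≤ g (-s1) := by
    have := hcoer (-s1)
    rw [abs_neg, abs_of_pos hs1pos, hs1] at this
    have h2 : (2 + ρ) / N v * N v = 2 + ρ := by field_simp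
    rw [h2] at this
    linarith
  -- positive-side crossing
  obtain ⟨sp, hsp_mem, hsp⟩ : ∃ s ∈ Icc (0:ℝ) s1, g s = 1 := by
    have h := intermediate_value_Icc (le_of_lt hs1pos) hgc.continuousOn
    have : (1:ℝ) ∈ Icc (g 0) (g s1) := ⟨by rw [hg0]; linarith, hgs1⟩
    obtain ⟨s, hs, hgs⟩ := h this
    exact ⟨s, hs, hgs⟩
  obtain ⟨sn, hsn_mem, hsn⟩ : ∃ s ∈ Icc (-s1) (0:ℝ), g s = 1 := by
    have h := intermediate_value_Icc' (by linarith : -s1 ≤ (0:ℝ)) hgc.continuousOn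
    have : (1:ℝ) ∈ Icc (g 0) (g (-s1)) := ⟨by rw [hg0]; linarith, hgs1'⟩
    obtain ⟨s, hs, hgs⟩ := h this
    exact ⟨s, hs, hgs⟩
  have hsp_pos : 0 < sp := by
    rcases eq_or_lt_of_le hsp_mem.1 with h | h
    · exfalso; rw [← h] at hsp; rw [hg0] at hsp; linarith
    · exact h
  have hsn_neg : sn < 0 := by
    rcases eq_or_lt_of_le hsn_mem.2 with h | h
    · exfalso; rw [h] at hsn; rw [hg0] at hsn; linarith
    · exact h
  set p : ℝ × ℝ := base + sn • v with hp
  set q : ℝ × ℝ := base + sp • v with hq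
  have hNp : N p = 1 := hsn
  have hNq : N q = 1 := hsp
  have hdq : ∀ s : ℝ, dotp ξ (base + s • v) = ρ := by
    intro s
    have : base + s • v = ρ • M + s • v := rfl
    rw [this, dotp_comb, hξM, hξv]
    ring
  have hpq : p ≠ q := by
    intro h
    have : (sn - sp) • v = 0 := by
      have := sub_eq_zero.mpr h
      simp only [hp, hq] at this
      have h2 : (base + sn • v) - (base + sp • v) = (sn - sp) • v := by module
      rw [← h2, this]
    rcases smul_eq_zero.mp this with h | h
    · linarith [sub_eq_zero.mp (by linarith [sub_eq_zero.mpr h] : sn - sp = 0)]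
    · exact hvne h
  -- uniqueness of the two crossings
  have huniq : ∀ x, N x = 1 → dotp ξ x = ρ → x = p ∨ x = q := by
    intro x hx hξx
    have hker : dotp ξ (x - base) = 0 := by
      have h1 : x = (x - base) + base := by ring
      have h2 : dotp ξ x = dotp ξ (x - base) + dotp ξ base := by
        rw [h1]
        have := dotp_comb ξ (x - base) base 1 1
        simpa using this
      have h3 : dotp ξ base = ρ := by
        have := hdq 0
        simpa using this
      rw [hξx, h3] at h2
      linarith
    obtain ⟨t, ht⟩ := ker_rep hker hξ
    have hx' : x = base + t • v := by rw [← hv] at ht; rw [← ht]; ring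
    rcases lt_trichotomy t 0 with h | h | h
    · left
      rw [hx', hp]
      congr 1
      have : t = sn := by
        have h1 : N (base + (-t) • (-v)) = 1 := by
          rw [show base + (-t) • (-v) = base + t • v by module, ← hx']; exact hx
        have h2 : N (base + (-sn) • (-v)) = 1 := by
          rw [show base + (-sn) • (-v) = base + sn • v by module]; exact hsn
        have := ray_unique hN hblt (by linarith : 0 < -t) (by linarith : 0 < -sn) h1 h2
        linarith
      rw [this]
    · exfalso
      rw [hx', h] at hx
      simp only [zero_smul, add_zero] at hx
      rw [hbρ] at hx
      linarith
    · right
      rw [hx', hq]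
      congr 1
      have : t = sp := by
        have h1 : N (base + t • v) = 1 := by rw [← hx']; exact hx
        exact ray_unique hN hblt h hsp_pos h1 hsp
      rw [this]
  -- segInf = ρ
  have hseg : segInf N p q = ρ := by
    have hlb : ∀ y ∈ (fun t : ℝ => N ((1 - t) • p + t • q)) '' Icc (0:ℝ) 1, ρ ≤ y := by
      rintro y ⟨t, _, rfl⟩
      have h1 : dotp ξ ((1 - t) • p + t • q) = ρ := by
        rw [dotp_comb]
        have h2 : dotp ξ p = ρ := by rw [hp]; exact hdq sn
        have h3 : dotp ξ q = ρ := by rw [hq]; exact hdq sp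
        rw [h2, h3]; ring
      calc ρ = dotp ξ ((1 - t) • p + t • q) := h1.symm
        _ ≤ N ((1 - t) • p + t • q) := hle _
    have hmem : ρ ∈ (fun t : ℝ => N ((1 - t) • p + t • q)) '' Icc (0:ℝ) 1 := by
      set t0 : ℝ := -sn / (sp - sn) with ht0
      have hd : 0 < sp - sn := by linarith
      refine ⟨t0, ⟨?_, ?_⟩, ?_⟩
      · apply div_nonneg (by linarith) (le_of_lt hd)
      · rw [ht0, div_le_one hd]; linarith
      · show N ((1 - t0) • p + t0 • q) = ρ
        have hcomb : (1 - t0) • p + t0 • q = base := by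
          have h1 : (1 - t0) • p + t0 • q = base + ((1 - t0) * sn + t0 * sp) • v := by
            simp only [hp, hq]
            module
          have h2 : (1 - t0) * sn + t0 * sp = 0 := by
            rw [ht0]; field_simp; ring
          rw [h1, h2]; simp
        rw [hcomb]
        exact hbρ
    exact le_antisymm
      (csInf_le ⟨ρ, hlb⟩ hmem)
      (le_csInf ⟨ρ, hmem⟩ hlb)
  have hmid := hP p q hNp hNq hseg
  exact ⟨p, q, hNp, hNq, by rw [hp]; exact hdq sn, by rw [hq]; exact hdq sp, hpq, huniq, hmid⟩

lemma dotp_add_left (f g x : ℝ × ℝ) : dotp (f + g) x = dotp f x + dotp g x := by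
  simp only [dotp, Prod.fst_add, Prod.snd_add]; ring

lemma dotp_cont (f : ℝ × ℝ) : Continuous fun x => dotp f x := by
  unfold dotp; fun_prop

/-- Pushing the chord of `{ξ = ρ}`: its midpoint `m` satisfies
`dotp η b₀ ≤ dotp η (ρ⁻¹ • m)` whenever `b₀` is a norming point of `ξ`. -/
lemma key_push (hN : IsNorm N) {ρ : ℝ} (hρ0 : 0 < ρ) (hρ1 : ρ < 1) (hP : PropP N ρ)
    {ξ b₀ η : ℝ × ℝ} (hle : ∀ x, dotp ξ x ≤ N x) (hb : N b₀ = 1) (hξb : dotp ξ b₀ = 1) :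
    ∀ p₀ q₀ : ℝ × ℝ, N p₀ = 1 → N q₀ = 1 → dotp ξ p₀ = ρ → dotp ξ q₀ = ρ → p₀ ≠ q₀ →
      dotp η b₀ ≤ dotp η (ρ⁻¹ • ((1/2 : ℝ) • p₀ + (1/2 : ℝ) • q₀)) := by
  intro p₀ q₀ hp₀ hq₀ hξp₀ hξq₀ hpq₀
  set S : Set (ℝ × ℝ) := {x | N x = 1} with hS
  have hScomp : IsCompact S := S_compact hN
  have hSne : S.Nonempty := ⟨b₀, hb⟩
  -- a uniform bound for dotp η on S
  obtain ⟨C, hC⟩ : ∃ C : ℝ, ∀ x ∈ S, |dotp η x| ≤ C := by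
    obtain ⟨C, hC⟩ := hScomp.exists_bound_of_continuousOn (dotp_cont η).continuousOn
    exact ⟨C, fun x hx => by simpa using hC x hx⟩
  have hC0 : 0 ≤ C := le_trans (abs_nonneg _) (hC b₀ hb)
  set δ : ℝ := 1 / (2 * (1 + |dotp η b₀|)) with hδ
  have hδpos : 0 < δ := by positivity
  set ε : ℕ → ℝ := fun n => δ / (n + 1) with hε
  have hεpos : ∀ n, 0 < ε n := by
    intro n
    apply div_pos hδpos
    positivity
  have hεle : ∀ n, ε n ≤ δ := by
    intro n
    rw [hε]
    apply div_le_self (le_of_lt hδpos)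
    have : (0:ℝ) ≤ (n:ℝ) := Nat.cast_nonneg n
    linarith
  have hεbound : ∀ n, ε n * |dotp η b₀| ≤ 1 / 2 := by
    intro n
    calc ε n * |dotp η b₀| ≤ δ * |dotp η b₀| :=
          mul_le_mul_of_nonneg_right (hεle n) (abs_nonneg _)
      _ ≤ 1/2 := by
          rw [hδ]
          rw [div_mul_eq_mul_div, one_mul, div_le_div_iff₀ (by positivity) (by norm_num)]
          nlinarith [abs_nonneg (dotp η b₀)]
  have hεtend : Tendsto ε atTop (𝓝 0) := by
    rw [hε]
    have h1 : Tendsto (fun n : ℕ => 1 / ((n : ℝ) + 1)) atTop (𝓝 0) :=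
      tendsto_one_div_add_atTop_nhds_zero_nat
    have h2 := h1.const_mul δ
    simpa [div_eq_mul_inv, mul_comm, one_div] using h2
  -- maximizers
  have hmax : ∀ n : ℕ, ∃ M ∈ S, ∀ x ∈ S, dotp (ξ + ε n • η) x ≤ dotp (ξ + ε n • η) M := by
    intro n
    obtain ⟨M, hM, hmax⟩ := hScomp.exists_isMaxOn hSne (dotp_cont (ξ + ε n • η)).continuousOn
    exact ⟨M, hM, fun x hx => hmax hx⟩
  choose Mf hMfS hMfmax using hmax
  set c : ℕ → ℝ := fun n => dotp (ξ + ε n • η) (Mf n) with hcdef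
  have hcge : ∀ n, 1 + ε n * dotp η b₀ ≤ c n := by
    intro n
    have := hMfmax n b₀ hb
    rw [dotp_add_left, dotp_smul_left, hξb] at this
    linarith [this]
  have hcpos : ∀ n, (1:ℝ)/2 ≤ c n := by
    intro n
    have h1 := hcge n
    have h2 : ε n * dotp η b₀ ≥ -(1/2) := by
      have := hεbound n
      have h3 : -(ε n * |dotp η b₀|) ≤ ε n * dotp η b₀ := by
        have := neg_abs_le (dotp η b₀)
        nlinarith [le_of_lt (hεpos n)]
      linarith
    linarith
  have hcle : ∀ n, c n ≤ 1 + ε n * C := by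
    intro n
    have h1 : dotp ξ (Mf n) ≤ 1 := by
      have := hle (Mf n)
      rw [hMfS n] at this
      exact this
    have h2 : dotp η (Mf n) ≤ C := le_trans (le_abs_self _) (hC _ (hMfS n))
    have : c n = dotp ξ (Mf n) + ε n * dotp η (Mf n) := by
      show dotp (ξ + ε n • η) (Mf n) = _
      rw [dotp_add_left, dotp_smul_left]
    rw [this]
    have := le_of_lt (hεpos n)
    nlinarith
  have hcge' : ∀ n, 1 - ε n * (C + |dotp η b₀|) ≤ c n := by
    intro n
    have h1 := hcge n
    have h2 : -( |dotp η b₀|) ≤ dotp η b₀ := neg_abs_le _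
    nlinarith [le_of_lt (hεpos n), hC0]
  have hctend : Tendsto c atTop (𝓝 1) := by
    have hlow : Tendsto (fun n => 1 - ε n * (C + |dotp η b₀|)) atTop (𝓝 1) := by
      have := (hεtend.mul_const (C + |dotp η b₀|)).const_sub 1
      simpa using this
    have hhigh : Tendsto (fun n => 1 + ε n * C) atTop (𝓝 1) := by
      have := (hεtend.mul_const C).const_add 1
      simpa using this
    exact tendsto_of_tendsto_of_tendsto_of_le_of_le hlow hhigh
      (fun n => hcge' n) (fun n => hcle n)
  -- normalized functionals and chords
  set ζ : ℕ → ℝ × ℝ := fun n => (c n)⁻¹ • (ξ + ε n • η) with hζdef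
  have hζle : ∀ n x, dotp (ζ n) x ≤ N x := by
    intro n x
    rcases eq_or_ne x 0 with rfl | hx
    · simp [dotp, N_zero hN]
    · have hNx : 0 < N x := N_pos hN hx
      have hy : ((N x)⁻¹ • x) ∈ S := by
        show N ((N x)⁻¹ • x) = 1
        rw [N_smul_of_nonneg hN (le_of_lt (inv_pos.2 hNx))]
        field_simp
      have h1 := hMfmax n _ hy
      have h2 : dotp (ξ + ε n • η) ((N x)⁻¹ • x) = (N x)⁻¹ * dotp (ξ + ε n • η) x := by
        have := dotp_comb (ξ + ε n • η) x 0 ((N x)⁻¹) 0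
        simpa using this
      rw [h2] at h1
      have h3 : dotp (ξ + ε n • η) x ≤ N x * c n := by
        have h4 := mul_le_mul_of_nonneg_left h1 (le_of_lt hNx)
        rw [← mul_assoc] at h4
        rw [mul_inv_cancel₀ (ne_of_gt hNx), one_mul] at h4
        exact le_trans h4 (le_of_eq rfl)
      rw [hζdef]
      rw [dotp_smul_left]
      have hcp : 0 < c n := lt_of_lt_of_le (by norm_num) (hcpos n)
      rw [inv_mul_le_iff₀ hcp]
      calc dotp (ξ + ε n • η) x ≤ N x * c n := h3
        _ = c n * N x := mul_comm _ _
  have hζM : ∀ n, dotp (ζ n) (Mf n) = 1 := by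
    intro n
    rw [hζdef, dotp_smul_left]
    have hcp : 0 < c n := lt_of_lt_of_le (by norm_num) (hcpos n)
    have h0 : dotp (ξ + ε n • η) (Mf n) = c n := rfl
    rw [h0]
    exact inv_mul_cancel₀ (ne_of_gt hcp)
  have hchords := fun n => chord_core hN hρ0 hρ1 hP (hζle n) (hMfS n) (hζM n)
  choose p q hp hq hζp hζq hpqne huniq hmid using hchords
  -- the midpoint inequality, pointwise in n
  have hkey : ∀ n, dotp η b₀ ≤ dotp η (ρ⁻¹ • ((1/2 : ℝ) • p n + (1/2 : ℝ) • q n)) := by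
    intro n
    set m : ℝ × ℝ := (1/2 : ℝ) • p n + (1/2 : ℝ) • q n with hm
    have hNm : N m = ρ := hmid n
    have hζm : dotp (ζ n) m = ρ := by
      rw [hm, dotp_comb, hζp n, hζq n]; ring
    set x : ℝ × ℝ := ρ⁻¹ • m with hx
    have hNx : N x = 1 := by
      rw [hx, N_smul_of_nonneg hN (le_of_lt (inv_pos.2 hρ0)), hNm]
      field_simp
    have hζx : dotp (ζ n) x = 1 := by
      have := dotp_comb (ζ n) m 0 (ρ⁻¹) 0
      simp only [smul_zero, add_zero, zero_smul] at this
      rw [hx, this, hζm]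
      field_simp
      simp
    -- x is a maximizer of ξ + ε n • η on S
    have hxmax : dotp (ξ + ε n • η) x = c n := by
      have h1 : dotp (ξ + ε n • η) x ≤ c n := hMfmax n x hNx
      have h2 : dotp (ξ + ε n • η) x = c n * dotp (ζ n) x := by
        rw [hζdef, dotp_smul_left]
        have hcp : 0 < c n := lt_of_lt_of_le (by norm_num) (hcpos n)
        field_simp
      rw [h2, hζx, mul_one]
    have h3 : dotp ξ x + ε n * dotp η x = c n := by
      rw [← hxmax, dotp_add_left, dotp_smul_left]
    have h4 : dotp ξ x ≤ 1 := by
      have := hle x; rw [hNx] at this; exact this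
    have h5 := hcge n
    have h6 : ε n * dotp η b₀ ≤ ε n * dotp η x := by
      nlinarith
    have := (mul_le_mul_iff_right₀ (hεpos n)).mp h6
    exact this
  -- convergent subsequences
  obtain ⟨pbar, hpbarS, φ₁, hφ₁, hp₁⟩ := hScomp.tendsto_subseq (fun n => hp n)
  obtain ⟨qbar, hqbarS, φ₂, hφ₂, hq₂⟩ := hScomp.tendsto_subseq (fun n => hq (φ₁ n))
  set α : ℕ → ℕ := φ₁ ∘ φ₂ with hα
  have hαmono : StrictMono α := hφ₁.comp hφ₂
  have hpα : Tendsto (fun n => p (α n)) atTop (𝓝 pbar) := hp₁.comp hφ₂.tendsto_atTop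
  have hqα : Tendsto (fun n => q (α n)) atTop (𝓝 qbar) := hq₂
  have hεα : Tendsto (fun n => ε (α n)) atTop (𝓝 0) := hεtend.comp hαmono.tendsto_atTop
  have hcα : Tendsto (fun n => c (α n)) atTop (𝓝 1) := hctend.comp hαmono.tendsto_atTop
  -- dotp ξ pbar = ρ
  have hξlim : ∀ (r : ℕ → ℝ × ℝ) (rbar : ℝ × ℝ), Tendsto r atTop (𝓝 rbar) →
      (∀ n, r n ∈ S) → (∀ n, dotp (ζ (α n)) (r n) = ρ) → dotp ξ rbar = ρ := by
    intro r rbar hr hrS hrζ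
    have h1 : ∀ n, dotp ξ (r n) + ε (α n) * dotp η (r n) = ρ * c (α n) := by
      intro n
      have h2 := hrζ n
      rw [hζdef, dotp_smul_left] at h2
      have hcp : 0 < c (α n) := lt_of_lt_of_le (by norm_num) (hcpos (α n))
      have h3 : dotp (ξ + ε (α n) • η) (r n) = c (α n) * ρ := by
        field_simp at h2
        linarith [h2]
      rw [dotp_add_left, dotp_smul_left] at h3
      rw [h3]; ring
    have h4 : Tendsto (fun n => dotp ξ (r n)) atTop (𝓝 (dotp ξ rbar)) :=
      ((dotp_cont ξ).tendsto rbar).comp hr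
    have h5 : Tendsto (fun n => dotp ξ (r n)) atTop (𝓝 ρ) := by
      have h6 : ∀ n, dotp ξ (r n) = ρ * c (α n) - ε (α n) * dotp η (r n) := by
        intro n; linarith [h1 n]
      rw [show (fun n => dotp ξ (r n)) = fun n => ρ * c (α n) - ε (α n) * dotp η (r n) from
        funext h6]
      have h7 : Tendsto (fun n => ρ * c (α n)) atTop (𝓝 ρ) := by
        have := hcα.const_mul ρ
        simpa using this
      have h8 : Tendsto (fun n => ε (α n) * dotp η (r n)) atTop (𝓝 0) := by
        apply squeeze_zero_norm (fun n => ?_) (by simpa using hεα.mul_const C)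
        rw [Real.norm_eq_abs, abs_mul]
        have := hC _ (hrS n)
        have := abs_of_pos (hεpos (α n))
        nlinarith [abs_nonneg (dotp η (r n)), le_of_lt (hεpos (α n)), hC _ (hrS n),
          abs_nonneg (ε (α n))]
      have := h7.sub h8
      simpa using this
    exact tendsto_nhds_unique h4 h5
  have hξpbar : dotp ξ pbar = ρ := hξlim _ pbar hpα (fun n => hp (α n)) (fun n => hζp (α n))
  have hξqbar : dotp ξ qbar = ρ := hξlim _ qbar hqα (fun n => hq (α n)) (fun n => hζq (α n))
  -- midpoint limit
  have hmtend : Tendsto (fun n => (1/2 : ℝ) • p (α n) + (1/2 : ℝ) • q (α n)) atTop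
      (𝓝 ((1/2 : ℝ) • pbar + (1/2 : ℝ) • qbar)) :=
    (hpα.const_smul _).add (hqα.const_smul _)
  set mbar : ℝ × ℝ := (1/2 : ℝ) • pbar + (1/2 : ℝ) • qbar with hmbar
  have hNmbar : N mbar = ρ := by
    have h1 : Tendsto (fun n => N ((1/2 : ℝ) • p (α n) + (1/2 : ℝ) • q (α n))) atTop
        (𝓝 (N mbar)) := ((N_continuous hN).tendsto mbar).comp hmtend
    have h2 : (fun n => N ((1/2 : ℝ) • p (α n) + (1/2 : ℝ) • q (α n))) = fun _ => ρ :=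
      funext fun n => hmid (α n)
    rw [h2] at h1
    exact (tendsto_nhds_unique tendsto_const_nhds h1).symm
  have hpbar_ne : pbar ≠ qbar := by
    intro h
    rw [hmbar, h] at hNmbar
    have : (1/2 : ℝ) • qbar + (1/2 : ℝ) • qbar = qbar := by module
    rw [this] at hNmbar
    rw [hqbarS] at hNmbar
    linarith
  -- identify with the canonical chord of ξ
  obtain ⟨P, Q, hP1, hQ1, hξP, hξQ, hPQ, hUniq, hMid⟩ :=
    chord_core hN hρ0 hρ1 hP hle hb hξb
  have hpbar_mem := hUniq pbar hpbarS hξpbar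
  have hqbar_mem := hUniq qbar hqbarS hξqbar
  have hmbar_eq : mbar = (1/2 : ℝ) • P + (1/2 : ℝ) • Q := by
    rcases hpbar_mem with h1 | h1 <;> rcases hqbar_mem with h2 | h2
    · exact absurd (h1.trans h2.symm) hpbar_ne
    · rw [hmbar, h1, h2]
    · rw [hmbar, h1, h2, add_comm]
    · exact absurd (h1.trans h2.symm) hpbar_ne
  -- identify the given points with the canonical chord
  have hp₀mem := hUniq p₀ hp₀ hξp₀
  have hq₀mem := hUniq q₀ hq₀ hξq₀
  have hm₀eq : (1/2 : ℝ) • p₀ + (1/2 : ℝ) • q₀ = (1/2 : ℝ) • P + (1/2 : ℝ) • Q := by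
    rcases hp₀mem with h1 | h1 <;> rcases hq₀mem with h2 | h2
    · exact absurd (h1.trans h2.symm) hpq₀
    · rw [h1, h2]
    · rw [h1, h2, add_comm]
    · exact absurd (h1.trans h2.symm) hpq₀
  -- pass the inequality to the limit
  have hxtend : Tendsto (fun n => dotp η (ρ⁻¹ • ((1/2 : ℝ) • p (α n) + (1/2 : ℝ) • q (α n))))
      atTop (𝓝 (dotp η (ρ⁻¹ • mbar))) := by
    have hc2 : Continuous fun z : ℝ × ℝ => dotp η (ρ⁻¹ • z) :=
      (dotp_cont η).comp (continuous_const_smul _)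
    exact (hc2.tendsto mbar).comp hmtend
  have hfinal : dotp η b₀ ≤ dotp η (ρ⁻¹ • mbar) :=
    ge_of_tendsto hxtend (Eventually.of_forall fun n => hkey (α n))
  rw [hm₀eq, ← hmbar_eq]
  exact hfinal

/-- Strict convexity: the sphere contains no segment (midpoint version). -/
lemma no_segment (hN : IsNorm N) {ρ : ℝ} (hρ0 : 0 < ρ) (hρ1 : ρ < 1) (hP : PropP N ρ)
    {a b : ℝ × ℝ} (ha : N a = 1) (hb : N b = 1)
    (hm : N ((1/2 : ℝ) • a + (1/2 : ℝ) • b) = 1) : a = b := by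
  by_contra hab
  obtain ⟨ξ, hle, hξm⟩ := exists_support hN hm
  have hξa : dotp ξ a ≤ 1 := by have := hle a; rw [ha] at this; exact this
  have hξb : dotp ξ b ≤ 1 := by have := hle b; rw [hb] at this; exact this
  have hsum : (1/2 : ℝ) * dotp ξ a + (1/2 : ℝ) * dotp ξ b = 1 := by
    rw [← dotp_comb]; exact hξm
  have hξa1 : dotp ξ a = 1 := by linarith
  have hξb1 : dotp ξ b = 1 := by linarith
  obtain ⟨P, Q, hP1, hQ1, hξP, hξQ, hPQ, _, _⟩ := chord_core hN hρ0 hρ1 hP hle hb hξb1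
  have h1 := key_push hN hρ0 hρ1 hP (η := b - a) hle hb hξb1 P Q hP1 hQ1 hξP hξQ hPQ
  have h2 := key_push hN hρ0 hρ1 hP (η := a - b) hle ha hξa1 P Q hP1 hQ1 hξP hξQ hPQ
  set xb : ℝ × ℝ := ρ⁻¹ • ((1/2 : ℝ) • P + (1/2 : ℝ) • Q) with hxb
  simp only [dotp, Prod.fst_sub, Prod.snd_sub] at h1 h2
  have hab1 : a.1 = b.1 := by nlinarith [sq_nonneg (b.1 - a.1), sq_nonneg (b.2 - a.2)]
  have hab2 : a.2 = b.2 := by nlinarith [sq_nonneg (b.1 - a.1), sq_nonneg (b.2 - a.2)]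
  exact hab (Prod.ext hab1 hab2)

/-- If a point strictly between two sphere points is on the sphere, so is the midpoint. -/
lemma collinear_mid (hN : IsNorm N) {z₁ z₂ zm : ℝ × ℝ} {θ : ℝ} (h0 : 0 < θ) (h1 : θ < 1)
    (hcomb : zm = (1 - θ) • z₁ + θ • z₂) (hN1 : N z₁ = 1) (hN2 : N z₂ = 1) (hNm : N zm = 1) :
    N ((1/2 : ℝ) • z₁ + (1/2 : ℝ) • z₂) = 1 := by
  have hle : N ((1/2 : ℝ) • z₁ + (1/2 : ℝ) • z₂) ≤ 1 := by
    have := N_comb_le hN (by norm_num : (0:ℝ) ≤ 1/2) (by norm_num : (0:ℝ) ≤ 1/2) z₁ z₂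
    rw [hN1, hN2] at this
    linarith
  have hge : 1 ≤ N ((1/2 : ℝ) • z₁ + (1/2 : ℝ) • z₂) := by
    rcases le_or_gt θ (1/2 : ℝ) with hc | hc
    · have hcomb2 : zm = (1 - 2*θ) • z₁ + (2*θ) • ((1/2 : ℝ) • z₁ + (1/2 : ℝ) • z₂) := by
        rw [hcomb]; module
      have := N_comb_le hN (by linarith : (0:ℝ) ≤ 1 - 2*θ) (by linarith : (0:ℝ) ≤ 2*θ)
        z₁ ((1/2 : ℝ) • z₁ + (1/2 : ℝ) • z₂)
      rw [← hcomb2, hNm, hN1] at this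
      nlinarith
    · have hcomb2 : zm = (2*θ - 1) • z₂ + (2 - 2*θ) • ((1/2 : ℝ) • z₁ + (1/2 : ℝ) • z₂) := by
        rw [hcomb]; module
      have := N_comb_le hN (by linarith : (0:ℝ) ≤ 2*θ - 1) (by linarith : (0:ℝ) ≤ 2 - 2*θ)
        z₂ ((1/2 : ℝ) • z₁ + (1/2 : ℝ) • z₂)
      rw [← hcomb2, hNm, hN2] at this
      nlinarith
  linarith

/-- Three collinear sphere points give a sphere segment (midpoint of the extremes). -/
lemma seg_of_three (hN : IsNorm N) {a d : ℝ × ℝ} (hd : d ≠ 0) {σ₁ σ₂ σm : ℝ}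
    (hlt1 : σ₁ < σm) (hlt2 : σm < σ₂)
    (h1 : N (a + σ₁ • d) = 1) (h2 : N (a + σ₂ • d) = 1) (hm : N (a + σm • d) = 1) :
    ∃ x y : ℝ × ℝ, x ≠ y ∧ N x = 1 ∧ N y = 1 ∧ N ((1/2 : ℝ) • x + (1/2 : ℝ) • y) = 1 := by
  set θ : ℝ := (σm - σ₁) / (σ₂ - σ₁) with hθ
  have hden : 0 < σ₂ - σ₁ := by linarith
  have hθ0 : 0 < θ := div_pos (by linarith) hden
  have hθ1 : θ < 1 := by rw [hθ, div_lt_one hden]; linarith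
  have hcomb : a + σm • d = (1 - θ) • (a + σ₁ • d) + θ • (a + σ₂ • d) := by
    have hθs : (1 - θ) * σ₁ + θ * σ₂ = σm := by
      rw [hθ]; field_simp; ring
    have : (1 - θ) • (a + σ₁ • d) + θ • (a + σ₂ • d)
        = a + ((1 - θ) * σ₁ + θ * σ₂) • d := by module
    rw [this, hθs]
  refine ⟨a + σ₁ • d, a + σ₂ • d, ?_, h1, h2, collinear_mid hN hθ0 hθ1 hcomb h1 h2 hm⟩
  intro h
  have : (σ₁ - σ₂) • d = 0 := by
    have h2 := sub_eq_zero.mpr h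
    have h3 : (a + σ₁ • d) - (a + σ₂ • d) = (σ₁ - σ₂) • d := by module
    rw [← h3, h2]
  rcases smul_eq_zero.mp this with h | h
  · have : σ₁ = σ₂ := by linarith [sub_eq_zero.mp h]
    linarith
  · exact hd h

/-- If an interior point of a segment is on the sphere and one endpoint is on the sphere
while the other is in the ball, the latter is on the sphere. -/
lemma force_end (hN : IsNorm N) {z₁ z₂ zm : ℝ × ℝ} {θ : ℝ} (h0 : 0 < θ) (h1 : θ ≤ 1)
    (hcomb : zm = (1 - θ) • z₁ + θ • z₂) (hN1 : N z₁ = 1) (hN2 : N z₂ ≤ 1) (hNm : N zm = 1) :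
    N z₂ = 1 := by
  have := N_comb_le hN (by linarith : (0:ℝ) ≤ 1 - θ) (le_of_lt h0) z₁ z₂
  rw [← hcomb, hNm, hN1] at this
  nlinarith

/-- Force the far endpoint onto the sphere, along a line. -/
lemma force_end_line (hN : IsNorm N) {a d : ℝ × ℝ} {σ₁ σm σ₂ : ℝ}
    (hlt1 : σ₁ < σm) (hlt2 : σm ≤ σ₂)
    (h1 : N (a + σ₁ • d) = 1) (hm : N (a + σm • d) = 1) (h2 : N (a + σ₂ • d) ≤ 1) :
    N (a + σ₂ • d) = 1 := by
  set θ : ℝ := (σm - σ₁) / (σ₂ - σ₁) with hθ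
  have hden : 0 < σ₂ - σ₁ := by linarith
  have hθ0 : 0 < θ := div_pos (by linarith) hden
  have hθ1 : θ ≤ 1 := by rw [hθ, div_le_one hden]; linarith
  have hcomb : a + σm • d = (1 - θ) • (a + σ₁ • d) + θ • (a + σ₂ • d) := by
    have hθs : (1 - θ) * σ₁ + θ * σ₂ = σm := by
      rw [hθ]; field_simp; ring
    have h3 : (1 - θ) • (a + σ₁ • d) + θ • (a + σ₂ • d)
        = a + ((1 - θ) * σ₁ + θ * σ₂) • d := by module
    rw [h3, hθs]
  exact force_end hN hθ0 hθ1 hcomb h1 h2 hm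

/-- Two distinct points at the same transversal height, with their shifts, give a segment. -/
lemma pairA (hN : IsNorm N) {τ : ℝ × ℝ} (hτ : τ ≠ 0) {a : ℝ × ℝ} {s s' : ℝ} (hss : s ≠ s')
    (h1 : N (a + s • τ) = 1) (h1' : N (a + (s - 1) • τ) = 1)
    (h2 : N (a + s' • τ) = 1) (h2' : N (a + (s' - 1) • τ) = 1) :
    ∃ x y : ℝ × ℝ, x ≠ y ∧ N x = 1 ∧ N y = 1 ∧ N ((1/2 : ℝ) • x + (1/2 : ℝ) • y) = 1 := by
  rcases lt_or_gt_of_ne hss with h | h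
  · exact seg_of_three hN hτ (by linarith : s - 1 < s) h h1' h2 h1
  · exact seg_of_three hN hτ (by linarith : s' - 1 < s') h h2' h1 h2

lemma wedge_coord (τ κ : ℝ × ℝ) (s y : ℝ) :
    wedge τ (s • τ + y • κ) = y * wedge τ κ := by
  simp only [wedge, Prod.fst_add, Prod.snd_add, Prod.smul_fst, Prod.smul_snd, smul_eq_mul]
  ring

lemma sortedB (hN : IsNorm N) {τ κ : ℝ × ℝ} (hQ : wedge τ κ ≠ 0)
    {s₁ s₂ s₃ y₁ y₂ y₃ : ℝ} (hy12 : y₁ < y₂) (hy23 : y₂ < y₃)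
    (hN1 : N (s₁ • τ + y₁ • κ) = 1) (hN2 : N (s₂ • τ + y₂ • κ) = 1)
    (hN3 : N (s₃ • τ + y₃ • κ) = 1)
    (hN1' : N ((s₁ - 1) • τ + y₁ • κ) = 1) (hN2' : N ((s₂ - 1) • τ + y₂ • κ) = 1)
    (hN3' : N ((s₃ - 1) • τ + y₃ • κ) = 1) :
    ∃ x y : ℝ × ℝ, x ≠ y ∧ N x = 1 ∧ N y = 1 ∧ N ((1/2 : ℝ) • x + (1/2 : ℝ) • y) = 1 := by
  have hτ : τ ≠ 0 := by
    intro h; apply hQ; rw [h]; simp [wedge]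
  set a : ℝ × ℝ := y₂ • κ with ha
  have e1 : ∀ s : ℝ, s • τ + y₂ • κ = a + s • τ := fun s => by rw [ha]; module
  by_cases hB1 : ∃ s', s₂ < s' ∧ N (s' • τ + y₂ • κ) ≤ 1
  · obtain ⟨s', hs', hNs'⟩ := hB1
    rw [e1] at hNs'
    have h1 : N (a + (s₂ - 1) • τ) = 1 := by rw [← e1]; exact hN2'
    have hm : N (a + s₂ • τ) = 1 := by rw [← e1]; exact hN2
    have hforce : N (a + s' • τ) = 1 :=
      force_end_line hN (by linarith : s₂ - 1 < s₂) (le_of_lt hs') h1 hm hNs'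
    exact seg_of_three hN hτ (by linarith : s₂ - 1 < s₂) hs' h1 hforce hm
  · by_cases hB2 : ∃ s', s' < s₂ - 1 ∧ N (s' • τ + y₂ • κ) ≤ 1
    · obtain ⟨s', hs', hNs'⟩ := hB2
      rw [e1] at hNs'
      have h1 : N (a + (s₂ - 1) • τ) = 1 := by rw [← e1]; exact hN2'
      have hm : N (a + s₂ • τ) = 1 := by rw [← e1]; exact hN2
      -- force the left endpoint, using direction -τ
      have hm' : N (a + (-(s₂ - 1)) • (-τ)) = 1 := by
        rw [show a + (-(s₂ - 1)) • (-τ) = a + (s₂ - 1) • τ by module]; exact h1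
      have h1' : N (a + (-s₂) • (-τ)) = 1 := by
        rw [show a + (-s₂) • (-τ) = a + s₂ • τ by module]; exact hm
      have h2' : N (a + (-s') • (-τ)) ≤ 1 := by
        rw [show a + (-s') • (-τ) = a + s' • τ by module]; exact hNs'
      have hforce : N (a + (-s') • (-τ)) = 1 :=
        force_end_line hN (by linarith : -s₂ < -(s₂ - 1)) (by linarith) h1' hm' h2'
      have hforce' : N (a + s' • τ) = 1 := by
        rw [show a + s' • τ = a + (-s') • (-τ) by module]; exact hforce
      exact seg_of_three hN hτ (show s' < s₂ - 1 from hs') (by linarith : s₂ - 1 < s₂)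
        hforce' hm h1
    · push_neg at hB1 hB2
      set lam : ℝ := (y₃ - y₂) / (y₃ - y₁) with hlam
      set mu : ℝ := (y₂ - y₁) / (y₃ - y₁) with hmu
      have hden : 0 < y₃ - y₁ := by linarith
      have hlam0 : 0 < lam := div_pos (by linarith) hden
      have hmu0 : 0 < mu := div_pos (by linarith) hden
      have hsum : lam + mu = 1 := by rw [hlam, hmu]; field_simp; ring
      have hmu1 : mu < 1 := by linarith
      have hy : lam * y₁ + mu * y₃ = y₂ := by
        rw [hlam, hmu]; field_simp; ring
      set sstar : ℝ := lam * s₁ + mu * s₃ with hsstar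
      have hcomb1 : lam • (s₁ • τ + y₁ • κ) + mu • (s₃ • τ + y₃ • κ)
          = sstar • τ + y₂ • κ := by
        rw [hsstar, ← hy]
        module
      have hup : N (sstar • τ + y₂ • κ) ≤ 1 := by
        rw [← hcomb1]
        have := N_comb_le hN (le_of_lt hlam0) (le_of_lt hmu0)
          (s₁ • τ + y₁ • κ) (s₃ • τ + y₃ • κ)
        rw [hN1, hN3] at this
        calc N (lam • (s₁ • τ + y₁ • κ) + mu • (s₃ • τ + y₃ • κ)) ≤ lam * 1 + mu * 1 := this
          _ = 1 := by rw [mul_one, mul_one]; exact hsum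
      have hcomb2 : lam • ((s₁ - 1) • τ + y₁ • κ) + mu • ((s₃ - 1) • τ + y₃ • κ)
          = (sstar - 1) • τ + y₂ • κ := by
        have hs1 : lam * (s₁ - 1) + mu * (s₃ - 1) = sstar - 1 := by
          rw [hsstar]; nlinarith [hsum]
        rw [← hy, ← hs1]
        module
      have hdown : N ((sstar - 1) • τ + y₂ • κ) ≤ 1 := by
        rw [← hcomb2]
        have := N_comb_le hN (le_of_lt hlam0) (le_of_lt hmu0)
          ((s₁ - 1) • τ + y₁ • κ) ((s₃ - 1) • τ + y₃ • κ)
        rw [hN1', hN3'] at this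
        calc N _ ≤ lam * 1 + mu * 1 := this
          _ = 1 := by rw [mul_one, mul_one]; exact hsum
      have hle2 : sstar ≤ s₂ := by
        by_contra hcon
        push_neg at hcon
        exact absurd hup (not_le.mpr (hB1 sstar hcon))
      have hge2 : s₂ ≤ sstar := by
        by_contra hcon
        push_neg at hcon
        exact absurd hdown (not_le.mpr (hB2 (sstar - 1) (by linarith)))
      have hs2 : sstar = s₂ := le_antisymm hle2 hge2
      have hx2 : s₂ • τ + y₂ • κ = (1 - mu) • (s₁ • τ + y₁ • κ) + mu • (s₃ • τ + y₃ • κ) := by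
        rw [show (1:ℝ) - mu = lam by linarith, hcomb1, hs2]
      have hmid := collinear_mid hN hmu0 hmu1 hx2 hN1 hN3 hN2
      refine ⟨s₁ • τ + y₁ • κ, s₃ • τ + y₃ • κ, ?_, hN1, hN3, hmid⟩
      intro h
      have := congrArg (wedge τ) h
      rw [wedge_coord, wedge_coord] at this
      have : y₁ = y₃ := by
        exact mul_right_cancel₀ hQ this
      linarith

/-- Three distinct sphere points whose `τ`-translates are also on the sphere
give a segment on the sphere. -/
lemma three_point (hN : IsNorm N) {τ x₁ x₂ x₃ : ℝ × ℝ} (hτ : τ ≠ 0)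
    (h12 : x₁ ≠ x₂) (h13 : x₁ ≠ x₃) (h23 : x₂ ≠ x₃)
    (hx₁ : N x₁ = 1) (hx₂ : N x₂ = 1) (hx₃ : N x₃ = 1)
    (hx₁' : N (x₁ - τ) = 1) (hx₂' : N (x₂ - τ) = 1) (hx₃' : N (x₃ - τ) = 1) :
    ∃ x y : ℝ × ℝ, x ≠ y ∧ N x = 1 ∧ N y = 1 ∧ N ((1/2 : ℝ) • x + (1/2 : ℝ) • y) = 1 := by
  set κ : ℝ × ℝ := (-τ.2, τ.1) with hκ
  set Q : ℝ := τ.1^2 + τ.2^2 with hQdef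
  have hQpos : 0 < Q := by
    have h : τ.1 ≠ 0 ∨ τ.2 ≠ 0 := by
      by_contra hcon
      push_neg at hcon
      exact hτ (Prod.ext hcon.1 hcon.2)
    rcases h with h | h
    · have : 0 < τ.1^2 := by positivity
      nlinarith [sq_nonneg τ.2]
    · have : 0 < τ.2^2 := by positivity
      nlinarith [sq_nonneg τ.1]
  have hQw : wedge τ κ = Q := by
    simp only [wedge, hκ, hQdef]; ring
  have hQne : wedge τ κ ≠ 0 := by rw [hQw]; exact ne_of_gt hQpos
  -- coordinates
  have hrep : ∀ x : ℝ × ℝ, x = (dotp τ x / Q) • τ + (wedge τ x / Q) • κ := by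
    intro x
    have h1 : x.1 = (dotp τ x / Q) * τ.1 + (wedge τ x / Q) * κ.1 := by
      have hQ0 : τ.1^2 + τ.2^2 ≠ 0 := (by linarith : 0 < τ.1^2 + τ.2^2).ne'
      have hQ1 : τ.2^2 + τ.1^2 ≠ 0 := (by linarith : 0 < τ.2^2 + τ.1^2).ne'
      simp only [dotp, wedge, hκ, hQdef]
      field_simp
      ring
    have h2 : x.2 = (dotp τ x / Q) * τ.2 + (wedge τ x / Q) * κ.2 := by
      have hQ0 : τ.1^2 + τ.2^2 ≠ 0 := (by linarith : 0 < τ.1^2 + τ.2^2).ne'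
      have hQ1 : τ.2^2 + τ.1^2 ≠ 0 := (by linarith : 0 < τ.2^2 + τ.1^2).ne'
      simp only [dotp, wedge, hκ, hQdef]
      field_simp
      ring
    apply Prod.ext
    · simpa using h1
    · simpa using h2
  set sc : ℝ × ℝ → ℝ := fun x => dotp τ x / Q with hsc
  set yc : ℝ × ℝ → ℝ := fun x => wedge τ x / Q with hyc
  have hrep' : ∀ x : ℝ × ℝ, x = sc x • τ + yc x • κ := hrep
  have hshift : ∀ x : ℝ × ℝ, x - τ = (sc x - 1) • τ + yc x • κ := by
    intro x
    calc x - τ = (sc x • τ + yc x • κ) - τ := by rw [← hrep' x]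
      _ = (sc x - 1) • τ + yc x • κ := by module
  -- rewritten sphere conditions
  have hc₁ : N (sc x₁ • τ + yc x₁ • κ) = 1 := by rw [← hrep']; exact hx₁
  have hc₂ : N (sc x₂ • τ + yc x₂ • κ) = 1 := by rw [← hrep']; exact hx₂
  have hc₃ : N (sc x₃ • τ + yc x₃ • κ) = 1 := by rw [← hrep']; exact hx₃
  have hc₁' : N ((sc x₁ - 1) • τ + yc x₁ • κ) = 1 := by rw [← hshift]; exact hx₁'
  have hc₂' : N ((sc x₂ - 1) • τ + yc x₂ • κ) = 1 := by rw [← hshift]; exact hx₂'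
  have hc₃' : N ((sc x₃ - 1) • τ + yc x₃ • κ) = 1 := by rw [← hshift]; exact hx₃'
  -- equal heights: use pairA
  have hA : ∀ i j : ℝ × ℝ, i ≠ j → N (sc i • τ + yc i • κ) = 1 →
      N ((sc i - 1) • τ + yc i • κ) = 1 → N (sc j • τ + yc j • κ) = 1 →
      N ((sc j - 1) • τ + yc j • κ) = 1 → yc i = yc j →
      ∃ x y : ℝ × ℝ, x ≠ y ∧ N x = 1 ∧ N y = 1 ∧ N ((1/2 : ℝ) • x + (1/2 : ℝ) • y) = 1 := by
    intro i j hij hi hi' hj hj' hyij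
    have hss : sc i ≠ sc j := by
      intro h
      apply hij
      rw [hrep' i, hrep' j, h, hyij]
    set aa : ℝ × ℝ := yc i • κ with haa
    have e : ∀ s : ℝ, s • τ + yc i • κ = aa + s • τ := fun s => by rw [haa]; module
    apply pairA hN hτ hss (a := aa)
    · rw [← e]; exact hi
    · rw [← e]; exact hi'
    · rw [← e, hyij]; exact hj
    · rw [← e, hyij]; exact hj'
  rcases eq_or_ne (yc x₁) (yc x₂) with h | hy12
  · exact hA x₁ x₂ h12 hc₁ hc₁' hc₂ hc₂' h
  rcases eq_or_ne (yc x₁) (yc x₃) with h | hy13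
  · exact hA x₁ x₃ h13 hc₁ hc₁' hc₃ hc₃' h
  rcases eq_or_ne (yc x₂) (yc x₃) with h | hy23
  · exact hA x₂ x₃ h23 hc₂ hc₂' hc₃ hc₃' h
  -- all heights distinct: sort and use sortedB
  rcases lt_trichotomy (yc x₁) (yc x₂) with h12' | h12' | h12'
  · rcases lt_trichotomy (yc x₂) (yc x₃) with h23' | h23' | h23'
    · exact sortedB hN hQne h12' h23' hc₁ hc₂ hc₃ hc₁' hc₂' hc₃'
    · exact absurd h23' hy23
    · rcases lt_trichotomy (yc x₁) (yc x₃) with h13' | h13' | h13'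
      · exact sortedB hN hQne h13' h23' hc₁ hc₃ hc₂ hc₁' hc₃' hc₂'
      · exact absurd h13' hy13
      · exact sortedB hN hQne h13' h12' hc₃ hc₁ hc₂ hc₃' hc₁' hc₂'
  · exact absurd h12' hy12
  · rcases lt_trichotomy (yc x₁) (yc x₃) with h13' | h13' | h13'
    · exact sortedB hN hQne h12' h13' hc₂ hc₁ hc₃ hc₂' hc₁' hc₃'
    · exact absurd h13' hy13
    · rcases lt_trichotomy (yc x₂) (yc x₃) with h23' | h23' | h23'
      · exact sortedB hN hQne h23' h13' hc₂ hc₃ hc₁ hc₂' hc₃' hc₁'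
      · exact absurd h23' hy23
      · exact sortedB hN hQne h23' h12' hc₃ hc₂ hc₁ hc₃' hc₂' hc₁'

lemma wedge_smul_right (u x : ℝ × ℝ) (r : ℝ) : wedge u (r • x) = r * wedge u x := by
  simp only [wedge, Prod.smul_fst, Prod.smul_snd, smul_eq_mul]; ring

lemma ker_mult {F w z : ℝ × ℝ} (hF : F ≠ 0) (hwk : dotp F w = 0) (hwne : w ≠ 0)
    (hz : dotp F z = 0) : ∃ r : ℝ, z = r • w := by
  obtain ⟨t, ht⟩ := ker_rep hz hF
  obtain ⟨tw, htw⟩ := ker_rep hwk hF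
  have htw0 : tw ≠ 0 := by
    intro h; rw [h, zero_smul] at htw; exact hwne htw
  refine ⟨t / tw, ?_⟩
  rw [ht, htw, smul_smul]
  congr 1
  field_simp

/-- Two distinct positively-oriented Birkhoff normals at `u` are impossible. -/
lemma corner (hN : IsNorm N) {ρ : ℝ} (hρ0 : 0 < ρ) (hρ1 : ρ < 1) (hP : PropP N ρ)
    {u w w' : ℝ × ℝ} (hu : N u = 1)
    (hw : N w = 1) (hwW : 0 < wedge u w) (hwB : ∀ l : ℝ, N u ≤ N (u + l • w))
    (hw' : N w' = 1) (hwW' : 0 < wedge u w') (hwB' : ∀ l : ℝ, N u ≤ N (u + l • w'))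
    (hne : w ≠ w') : False := by
  obtain ⟨F₁, hF₁le, hF₁u, hF₁w⟩ := support_of_birkhoff hN hu hw (ne_of_gt hwW) hwB
  obtain ⟨F₂, hF₂le, hF₂u, hF₂w'⟩ := support_of_birkhoff hN hu hw' (ne_of_gt hwW') hwB'
  have hF₁ne : F₁ ≠ 0 := by
    intro h; rw [h] at hF₁u; simp [dotp] at hF₁u
  have hF₂ne : F₂ ≠ 0 := by
    intro h; rw [h] at hF₂u; simp [dotp] at hF₂u
  have hwne : w ≠ 0 := by
    intro h; rw [h, N_zero hN] at hw; norm_num at hw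
  have hw'ne : w' ≠ 0 := by
    intro h; rw [h, N_zero hN] at hw'; norm_num at hw'
  have hF₂w : dotp F₂ w ≠ 0 := by
    intro hzero
    obtain ⟨r, hr⟩ := ker_mult hF₂ne hF₂w' hw'ne hzero
    have hrabs : |r| = 1 := by
      have := hN.2.1 r w'
      rw [← hr, hw, hw'] at this
      linarith [this]
    rcases (abs_eq (by norm_num : (0:ℝ) ≤ 1)).mp hrabs with h | h
    · rw [h, one_smul] at hr; exact hne hr
    · rw [h] at hr
      rw [hr, wedge_smul_right] at hwW
      nlinarith
  have hindep : ∀ z : ℝ × ℝ, dotp F₁ z = 0 → dotp F₂ z = 0 → z = 0 := by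
    intro z h1 h2
    obtain ⟨r, hr⟩ := ker_mult hF₁ne hF₁w hwne h1
    rw [hr] at h2
    have : dotp F₂ (r • w) = r * dotp F₂ w := by
      have := dotp_comb F₂ w 0 r 0
      simpa using this
    rw [this] at h2
    rcases mul_eq_zero.mp h2 with h | h
    · rw [hr, h, zero_smul]
    · exact absurd h hF₂w
  -- functionals χ t for t ∈ (0,1)
  set χ : ℝ → ℝ × ℝ := fun t => (1 - t) • F₁ + t • F₂ with hχ
  have hχval : ∀ t (x : ℝ × ℝ), dotp (χ t) x = (1 - t) * dotp F₁ x + t * dotp F₂ x := by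
    intro t x
    rw [hχ]
    show dotp ((1 - t) • F₁ + t • F₂) x = _
    rw [dotp_add_left, dotp_smul_left, dotp_smul_left]
  have hχle : ∀ t, 0 ≤ t → t ≤ 1 → ∀ x, dotp (χ t) x ≤ N x := by
    intro t h0 h1 x
    rw [hχval]
    have g1 := hF₁le x
    have g2 := hF₂le x
    nlinarith
  have hχu : ∀ t, dotp (χ t) u = 1 := by
    intro t; rw [hχval, hF₁u, hF₂u]; ring
  -- for t in (0,1): chord through ρ•u with q = 2ρu - p
  have hchord : ∀ t, 0 < t → t < 1 →
      ∃ p : ℝ × ℝ, N p = 1 ∧ dotp (χ t) p = ρ ∧ N (p - (2*ρ) • u) = 1 := by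
    intro t h0 h1
    obtain ⟨p, q, hp1, hq1, hχp, hχq, hpq, huniq, hmid⟩ :=
      chord_core hN hρ0 hρ1 hP (hχle t (le_of_lt h0) (le_of_lt h1)) hu (hχu t)
    set m : ℝ × ℝ := (1/2 : ℝ) • p + (1/2 : ℝ) • q with hm
    have hxm : N (ρ⁻¹ • m) = 1 := by
      rw [N_smul_of_nonneg hN (le_of_lt (inv_pos.2 hρ0)), hmid]
      field_simp
    have hχm : dotp (χ t) (ρ⁻¹ • m) = 1 := by
      have h2 : dotp (χ t) m = ρ := by
        rw [hm, dotp_comb, hχp, hχq]; ring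
      have h3 : dotp (χ t) (ρ⁻¹ • m) = ρ⁻¹ * dotp (χ t) m := by
        have := dotp_comb (χ t) m 0 ρ⁻¹ 0
        simpa using this
      rw [h3, h2]
      field_simp
    -- face of χ t is {u}
    have hface : ρ⁻¹ • m = u := by
      have ha : dotp F₁ (ρ⁻¹ • m) ≤ 1 := by
        have := hF₁le (ρ⁻¹ • m); rw [hxm] at this; exact this
      have hb : dotp F₂ (ρ⁻¹ • m) ≤ 1 := by
        have := hF₂le (ρ⁻¹ • m); rw [hxm] at this; exact this
      have hcomb := hχm
      rw [hχval] at hcomb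
      have ha1 : dotp F₁ (ρ⁻¹ • m) = 1 := by nlinarith
      have hb1 : dotp F₂ (ρ⁻¹ • m) = 1 := by nlinarith
      have hz : ρ⁻¹ • m - u = 0 := by
        apply hindep
        · have : dotp F₁ (ρ⁻¹ • m - u) = dotp F₁ (ρ⁻¹ • m) - dotp F₁ u := by
            simp only [dotp, Prod.fst_sub, Prod.snd_sub]; ring
          rw [this, ha1, hF₁u]; ring
        · have : dotp F₂ (ρ⁻¹ • m - u) = dotp F₂ (ρ⁻¹ • m) - dotp F₂ u := by
            simp only [dotp, Prod.fst_sub, Prod.snd_sub]; ring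
          rw [this, hb1, hF₂u]; ring
      have := sub_eq_zero.mp hz
      exact this
    have hmρu : m = ρ • u := by
      have := congrArg (fun z => ρ • z) hface
      rw [smul_smul] at this
      rw [mul_inv_cancel₀ (ne_of_gt hρ0), one_smul] at this
      exact this
    have hpq2 : p + q = (2*ρ) • u := by
      have h4 : (1/2 : ℝ) • p + (1/2 : ℝ) • q = ρ • u := by rw [← hm, hmρu]
      have := congrArg (fun z => (2:ℝ) • z) h4
      calc p + q = (2:ℝ) • ((1/2 : ℝ) • p + (1/2 : ℝ) • q) := by module
        _ = (2:ℝ) • (ρ • u) := by rw [h4]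
        _ = (2*ρ) • u := by rw [smul_smul]
    refine ⟨p, hp1, hχp, ?_⟩
    have h5 : p - (2*ρ) • u = -q := by
      rw [← hpq2]; module
    rw [h5, N_neg hN, hq1]
  -- separation of distinct chords
  have hsep : ∀ t t' : ℝ, t ≠ t' → ∀ x, N x = 1 →
      dotp (χ t) x = ρ → dotp (χ t') x = ρ → False := by
    intro t t' htt' x hx h1 h2
    rw [hχval] at h1 h2
    have hdiff : (t - t') * (dotp F₂ x - dotp F₁ x) = 0 := by linear_combination h1 - h2
    have h3 : dotp F₂ x = dotp F₁ x := by
      rcases mul_eq_zero.mp hdiff with h | h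
      · exact absurd (by linarith : t = t') htt'
      · linarith
    have h4 : dotp F₁ x = ρ := by linear_combination h1 - t * h3
    have h5 : dotp F₂ x = ρ := by linarith
    have hz : x - ρ • u = 0 := by
      apply hindep
      · have he : dotp F₁ (x - ρ • u) = dotp F₁ x - ρ * dotp F₁ u := by
          simp only [dotp, Prod.fst_sub, Prod.snd_sub, Prod.smul_fst, Prod.smul_snd,
            smul_eq_mul]; ring
        rw [he, h4, hF₁u]; ring
      · have he : dotp F₂ (x - ρ • u) = dotp F₂ x - ρ * dotp F₂ u := by
          simp only [dotp, Prod.fst_sub, Prod.snd_sub, Prod.smul_fst, Prod.smul_snd,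
            smul_eq_mul]; ring
        rw [he, h5, hF₂u]; ring
    have hxρu : x = ρ • u := sub_eq_zero.mp hz
    rw [hxρu, N_smul_of_nonneg hN (le_of_lt hρ0), hu, mul_one] at hx
    linarith
  -- three points
  obtain ⟨p₁, hp₁1, hχp₁, hp₁'⟩ := hchord (1/4) (by norm_num) (by norm_num)
  obtain ⟨p₂, hp₂1, hχp₂, hp₂'⟩ := hchord (1/2) (by norm_num) (by norm_num)
  obtain ⟨p₃, hp₃1, hχp₃, hp₃'⟩ := hchord (3/4) (by norm_num) (by norm_num)
  have hune : u ≠ 0 := by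
    intro h; rw [h, N_zero hN] at hu; norm_num at hu
  have hτne : (2*ρ) • u ≠ (0 : ℝ × ℝ) := by
    intro h
    rcases smul_eq_zero.mp h with h | h
    · linarith
    · exact hune h
  have h12 : p₁ ≠ p₂ := by
    intro h; exact hsep (1/4) (1/2) (by norm_num) p₂ hp₂1 (h ▸ hχp₁) hχp₂
  have h13 : p₁ ≠ p₃ := by
    intro h; exact hsep (1/4) (3/4) (by norm_num) p₃ hp₃1 (h ▸ hχp₁) hχp₃
  have h23 : p₂ ≠ p₃ := by
    intro h; exact hsep (1/2) (3/4) (by norm_num) p₃ hp₃1 (h ▸ hχp₂) hχp₃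
  obtain ⟨x, y, hxy, hx1, hy1, hmid1⟩ :=
    three_point hN hτne h12 h13 h23 hp₁1 hp₂1 hp₃1 hp₁' hp₂' hp₃'
  exact hxy (no_segment hN hρ0 hρ1 hP hx1 hy1 hmid1)


theorem main (hN : IsNorm N) (ρ : ℝ) (hρ0 : 0 < ρ) (hρ1 : ρ < 1)
    (hP : PropP N ρ) :
    ∀ u : ℝ × ℝ, N u = 1 →
      ∃! w : ℝ × ℝ, N w = 1 ∧ 0 < wedge u w ∧ ∀ l : ℝ, N u ≤ N (u + l • w) := by
  intro u hu
  obtain ⟨F, hFle, hFu⟩ := exists_support hN hu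
  set w₀ : ℝ × ℝ := (-F.2, F.1) with hw₀
  have hFw₀ : dotp F w₀ = 0 := by simp only [dotp, hw₀]; ring
  have hwedge₀ : wedge u w₀ = 1 := by
    have : wedge u w₀ = dotp F u := by simp only [wedge, dotp, hw₀]; ring
    rw [this, hFu]
  have hw₀ne : w₀ ≠ 0 := by
    intro h
    have h1 : wedge u w₀ = 0 := by rw [h]; simp [wedge]
    rw [hwedge₀] at h1; norm_num at h1
  have hnw : 0 < N w₀ := N_pos hN hw₀ne
  set w : ℝ × ℝ := (N w₀)⁻¹ • w₀ with hwdef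
  have hw1 : N w = 1 := by
    rw [hwdef, N_smul_of_nonneg hN (le_of_lt (inv_pos.2 hnw))]
    field_simp
  have hw2 : 0 < wedge u w := by
    rw [hwdef, wedge_smul_right, hwedge₀, mul_one]
    exact inv_pos.2 hnw
  have hw3 : ∀ l : ℝ, N u ≤ N (u + l • w) := by
    intro l
    have h1 : dotp F (u + l • w) = 1 := by
      have h2 : u + l • w = (1:ℝ) • u + (l * (N w₀)⁻¹) • w₀ := by
        rw [hwdef]; module
      rw [h2, dotp_comb, hFu, hFw₀]
      ring
    calc N u = 1 := hu
      _ = dotp F (u + l • w) := h1.symm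
      _ ≤ N (u + l • w) := hFle _
  refine ⟨w, ⟨hw1, hw2, hw3⟩, ?_⟩
  intro y hy
  by_contra hne
  exact corner hN hρ0 hρ1 hP hu hy.1 hy.2.1 hy.2.2 hw1 hw2 hw3 hne

end Stmt5

/-- Under (P-ρS), every `u ∈ S` has a unique `u⊥ ∈ S` with `u ≺ u⊥`
which is Birkhoff-orthogonal to `u`: `N u ≤ N (u + λ u⊥)` for all real `λ`. -/
theorem stmt_5 (N : ℝ × ℝ → ℝ) (hN : IsNorm N) (ρ : ℝ) (hρ0 : 0 < ρ) (hρ1 : ρ < 1)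
    (hP : PropP N ρ) :
    ∀ u : ℝ × ℝ, N u = 1 →
      ∃! w : ℝ × ℝ, N w = 1 ∧ 0 < wedge u w ∧ ∀ l : ℝ, N u ≤ N (u + l • w) :=
  Stmt5.main hN ρ hρ0 hρ1 hP
end
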